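/- arXiv:2505.09948 — 6 statements merged into one kernel-verified Lean document; each statement's English description precedes it below -/
import Mathlib

section
/- Let x ∈ D and let φ_x : 𝕋 → 𝕋 be the Möbius transformation φ_x(z) = (z + x)/(1 + conj(x)·z). Then the pushforward (φ_x)_*(m) of the normalized arc-length measure m under φ_x equals the measure P_x·m with density the Poisson kernel P_x. -/
open MeasureTheory Filter Set

noncomputable section

/-- The unit circle 𝕋 = {z ∈ ℂ : |z| = 1}. -/
def unitCircle : Set ℂ := {z : ℂ | ‖z‖ = 1}

/-- The open unit disc D = {z ∈ ℂ : |z| < 1}. -/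
def unitDisc : Set ℂ := {z : ℂ | ‖z‖ < 1}

/-- Normalized arc-length (Haar probability) measure on the unit circle, realised as a
measure on ℂ: the pushforward of Lebesgue measure on [0,1) under t ↦ e^{2πit}. -/
def mCircle : Measure ℂ :=
  Measure.map (fun t : ℝ => Complex.exp (2 * (Real.pi : ℂ) * Complex.I * (t : ℂ)))
    (volume.restrict (Set.Ico (0 : ℝ) 1))

/-- The Poisson kernel P_x(z) = (1 − |x|²)/|z − x|². -/
def poissonK (x z : ℂ) : ℝ := (1 - ‖x‖ ^ 2) / ‖z - x‖ ^ 2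

/-- `T` is a finite Blaschke product of degree `n ≥ 1`. -/
def IsBlaschke (n : ℕ) (T : ℂ → ℂ) : Prop :=
  1 ≤ n ∧ ∃ (θ₀ : ℂ) (a : Fin n → ℂ), ‖θ₀‖ = 1 ∧ (∀ i, ‖a i‖ < 1) ∧
    ∀ z : ℂ, T z = θ₀ * ∏ i, (z - a i) / (1 - (starRingEnd ℂ) (a i) * z)

/-- inf_{z ∈ 𝕋} |T'(z)|. -/
def derivInf (T : ℂ → ℂ) : ℝ := ⨅ z : unitCircle, ‖deriv T (z : ℂ)‖

/-- The backward cocycle iterate T_{σ^{-n}ω}^{(n)} = T_{σ^{-1}ω} ∘ ⋯ ∘ T_{σ^{-n}ω}. -/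
def backIter {Ω : Type*} (σinv : Ω → Ω) (T : Ω → ℂ → ℂ) : ℕ → Ω → ℂ → ℂ
  | 0, _, z => z
  | n + 1, ω, z => backIter σinv T n ω (T (σinv^[n + 1] ω) z)

/-- Parametrization of the circle. -/
def eC (t : ℝ) : ℂ := Complex.exp (2 * (Real.pi : ℂ) * Complex.I * (t : ℂ))

lemma eC_abs (t : ℝ) : ‖eC t‖ = 1 := by
  simp [eC, Complex.norm_exp]

lemma eC_ne_zero (t : ℝ) : eC t ≠ 0 := Complex.exp_ne_zero _

lemma eC_mul_conj (t : ℝ) : eC t * (starRingEnd ℂ) (eC t) = 1 := by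
  rw [Complex.mul_conj]
  norm_cast
  rw [← Complex.sq_norm, eC_abs]; norm_num

lemma eC_periodic : Function.Periodic eC 1 := by
  intro t
  simp only [eC]
  push_cast
  rw [mul_add, Complex.exp_add, mul_one, Complex.exp_two_pi_mul_I, mul_one]

lemma eC_hasDerivAt (t : ℝ) :
    HasDerivAt eC (2 * (Real.pi : ℂ) * Complex.I * eC t) t := by
  have h : HasDerivAt (fun z : ℂ => Complex.exp (2 * (Real.pi : ℂ) * Complex.I * z))
      (2 * (Real.pi : ℂ) * Complex.I * Complex.exp (2 * (Real.pi : ℂ) * Complex.I * (t:ℂ))) (t : ℂ) := by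
    simpa [mul_comm] using ((hasDerivAt_id (t:ℂ)).const_mul (2 * (Real.pi : ℂ) * Complex.I)).cexp
  exact h.comp_ofReal

/-- The lifted angle function. -/
def gC (x : ℂ) (t : ℝ) : ℝ := t - (Complex.log (1 + (starRingEnd ℂ) x * eC t)).im / Real.pi

lemma wC_re_pos {x : ℂ} (hx : ‖x‖ < 1) (t : ℝ) :
    0 < (1 + (starRingEnd ℂ) x * eC t).re := by
  have h1 : ‖(starRingEnd ℂ) x * eC t‖ = ‖x‖ := by
    simp [map_mul, eC_abs]
  have h2 : |((starRingEnd ℂ) x * eC t).re| ≤ ‖x‖ := by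
    rw [← h1]; exact Complex.abs_re_le_norm _
  have := abs_le.1 h2
  simp only [Complex.add_re, Complex.one_re]
  linarith

lemma wC_slitPlane {x : ℂ} (hx : ‖x‖ < 1) (t : ℝ) :
    (1 + (starRingEnd ℂ) x * eC t) ∈ Complex.slitPlane :=
  Complex.mem_slitPlane_iff.2 (Or.inl (wC_re_pos hx t))

lemma wC_ne_zero {x : ℂ} (hx : ‖x‖ < 1) (t : ℝ) :
    (1 + (starRingEnd ℂ) x * eC t) ≠ 0 :=
  Complex.slitPlane_ne_zero (wC_slitPlane hx t)

lemma conj_wC (x : ℂ) (t : ℝ) :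
    (starRingEnd ℂ) (1 + (starRingEnd ℂ) x * eC t) = 1 + x * (starRingEnd ℂ) (eC t) := by
  simp


lemma eC_gC {x : ℂ} (hx : ‖x‖ < 1) (t : ℝ) :
    eC (gC x t) = (eC t + x) / (1 + (starRingEnd ℂ) x * eC t) := by
  set w : ℂ := 1 + (starRingEnd ℂ) x * eC t with hw
  have hw0 : w ≠ 0 := wC_ne_zero hx t
  set L : ℂ := Complex.log w with hL
  have hπ : (Real.pi : ℂ) ≠ 0 := by
    norm_cast; exact Real.pi_ne_zero
  have h1 : eC (gC x t) = eC t * Complex.exp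
      ((2 * (Real.pi : ℂ) * Complex.I) * (-((L.im : ℂ) / (Real.pi : ℂ)))) := by
    rw [eC, gC, ← hw, ← hL]
    rw [show ((↑(t - (Complex.log w).im / Real.pi) : ℂ)) =
      (t : ℂ) + (-((L.im : ℂ) / (Real.pi : ℂ))) by push_cast; ring, mul_add, Complex.exp_add, eC]
  have h2 : (2 * (Real.pi : ℂ) * Complex.I) * (-((L.im : ℂ) / (Real.pi : ℂ)))
      = (starRingEnd ℂ) L - L := by
    rw [show (starRingEnd ℂ) L - L = -(L - (starRingEnd ℂ) L) by ring, Complex.sub_conj]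
    field_simp
    push_cast; ring
  have h3 : Complex.exp ((starRingEnd ℂ) L - L) = (starRingEnd ℂ) w / w := by
    rw [Complex.exp_sub, Complex.exp_conj, hL, Complex.exp_log hw0]
  have h4 : eC t * (starRingEnd ℂ) w = eC t + x := by
    rw [hw]
    simp only [map_add, map_one, map_mul, Complex.conj_conj]
    have h := eC_mul_conj t
    calc eC t * (1 + x * (starRingEnd ℂ) (eC t))
        = eC t + x * (eC t * (starRingEnd ℂ) (eC t)) := by ring
      _ = eC t + x := by rw [h, mul_one]
  rw [h1, h2, h3, mul_div_assoc', h4]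

/-- The derivative of `gC`. -/
def GC (x : ℂ) (t : ℝ) : ℝ :=
  (1 - ‖x‖ ^ 2) / Complex.normSq (1 + (starRingEnd ℂ) x * eC t)

lemma normSq_wC_pos {x : ℂ} (hx : ‖x‖ < 1) (t : ℝ) :
    0 < Complex.normSq (1 + (starRingEnd ℂ) x * eC t) :=
  Complex.normSq_pos.2 (wC_ne_zero hx t)

lemma GC_pos {x : ℂ} (hx : ‖x‖ < 1) (t : ℝ) : 0 < GC x t := by
  apply div_pos _ (normSq_wC_pos hx t)
  nlinarith [norm_nonneg x]

lemma gC_hasDerivAt {x : ℂ} (hx : ‖x‖ < 1) (t : ℝ) :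
    HasDerivAt (gC x) (GC x t) t := by
  set z : ℂ := eC t with hz
  set u : ℂ := (starRingEnd ℂ) x * z with hu
  have hw0 : (1 + u) ≠ 0 := wC_ne_zero hx t
  have hπ : (Real.pi : ℝ) ≠ 0 := Real.pi_ne_zero
  have hw : HasDerivAt (fun s : ℝ => 1 + (starRingEnd ℂ) x * eC s)
      ((starRingEnd ℂ) x * (2 * (Real.pi : ℂ) * Complex.I * z)) t :=
    ((eC_hasDerivAt t).const_mul _).const_add 1
  have hlog : HasDerivAt (fun s : ℝ => Complex.log (1 + (starRingEnd ℂ) x * eC s))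
      (((starRingEnd ℂ) x * (2 * (Real.pi : ℂ) * Complex.I * z)) / (1 + u)) t :=
    hw.clog_real (wC_slitPlane hx t)
  have him : HasDerivAt (fun s : ℝ => (Complex.log (1 + (starRingEnd ℂ) x * eC s)).im)
      ((((starRingEnd ℂ) x * (2 * (Real.pi : ℂ) * Complex.I * z)) / (1 + u)).im) t :=
    Complex.imCLM.hasFDerivAt.comp_hasDerivAt t hlog
  have hg : HasDerivAt (gC x)
      (1 - (((starRingEnd ℂ) x * (2 * (Real.pi : ℂ) * Complex.I * z)) / (1 + u)).im / Real.pi) t :=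
    (hasDerivAt_id t).sub (him.div_const _)
  convert hg using 1
  -- now the algebra
  have h1 : ((starRingEnd ℂ) x * (2 * (Real.pi : ℂ) * Complex.I * z)) / (1 + u)
      = ((2 * Real.pi : ℝ) : ℂ) * (Complex.I * (u / (1 + u))) := by
    push_cast; field_simp; ring
  have h2 : ((↑(2 * Real.pi) : ℂ) * (Complex.I * (u / (1 + u)))).im
      = 2 * Real.pi * (u / (1 + u)).re := by
    simp [Complex.mul_im, Complex.mul_re, Complex.ofReal_re, Complex.ofReal_im]
  rw [h1, h2]
  have hN : Complex.normSq (1 + u) ≠ 0 := ne_of_gt (normSq_wC_pos hx t)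
  have hre : (u / (1 + u)).re
      = (u.re * (1 + u.re) + u.im * u.im) / Complex.normSq (1 + u) := by
    rw [Complex.div_re]
    simp [Complex.add_re, Complex.add_im]
    ring
  have hnormSq : Complex.normSq (1 + u) = 1 + 2 * u.re + u.re ^ 2 + u.im ^ 2 := by
    simp [Complex.normSq_apply, Complex.add_re, Complex.add_im]
    ring
  have habs : ‖x‖ ^ 2 = u.re ^ 2 + u.im ^ 2 := by
    have : Complex.normSq u = Complex.normSq x := by
      rw [hu, map_mul, Complex.normSq_conj, hz]
      have : Complex.normSq (eC t) = 1 := by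
        rw [← Complex.sq_norm, eC_abs]; norm_num
      rw [this, mul_one]
    rw [Complex.sq_norm, ← this, Complex.normSq_apply]; ring
  rw [GC, ← hz, ← hu, hre, habs]
  have h3 : 2 * Real.pi * ((u.re * (1 + u.re) + u.im * u.im) / Complex.normSq (1 + u)) / Real.pi
      = 2 * ((u.re * (1 + u.re) + u.im * u.im) / Complex.normSq (1 + u)) := by
    field_simp
  rw [h3, hnormSq]
  have hN' : (1 : ℝ) + 2 * u.re + u.re ^ 2 + u.im ^ 2 ≠ 0 := by rw [← hnormSq]; exact hN
  have hN'' : (1 : ℝ) + u.re * 2 + u.re ^ 2 + u.im ^ 2 ≠ 0 := fun h => hN' (by linarith)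
  field_simp
  ring

lemma poissonK_gC {x : ℂ} (hx : ‖x‖ < 1) (t : ℝ) :
    poissonK x (eC (gC x t))
      = Complex.normSq (1 + (starRingEnd ℂ) x * eC t) / (1 - ‖x‖ ^ 2) := by
  have hw0 := wC_ne_zero hx t
  have hA : (0:ℝ) < 1 - ‖x‖ ^ 2 := by nlinarith [norm_nonneg x]
  have h1 : eC (gC x t) - x
      = eC t * (((1 - ‖x‖ ^ 2 : ℝ)) : ℂ) / (1 + (starRingEnd ℂ) x * eC t) := by
    rw [eC_gC hx t]
    have hxc : ((‖x‖ ^ 2 : ℝ) : ℂ) = x * (starRingEnd ℂ) x := by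
      rw [Complex.sq_norm, Complex.mul_conj]
    rw [Complex.ofReal_sub, Complex.ofReal_one, hxc]
    have hw0' : 1 + eC t * (starRingEnd ℂ) x ≠ 0 := by rw [mul_comm]; exact hw0
    field_simp
    ring
  have h2 : ‖eC (gC x t) - x‖
      = (1 - ‖x‖ ^ 2) / ‖1 + (starRingEnd ℂ) x * eC t‖ := by
    rw [h1, norm_div, norm_mul, eC_abs, one_mul, Complex.norm_real, Real.norm_eq_abs, abs_of_pos hA]
  rw [poissonK, h2, div_pow, div_div_eq_mul_div, Complex.sq_norm, Complex.sq_norm]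
  have hA' : (1:ℝ) - Complex.normSq x ≠ 0 := by rw [← Complex.sq_norm]; exact ne_of_gt hA
  rw [sq, mul_div_mul_left _ _ hA']

lemma GC_mul_poissonK {x : ℂ} (hx : ‖x‖ < 1) (t : ℝ) :
    GC x t * poissonK x (eC (gC x t)) = 1 := by
  have hA : (0:ℝ) < 1 - ‖x‖ ^ 2 := by nlinarith [norm_nonneg x]
  rw [poissonK_gC hx t, GC]
  rw [div_mul_div_comm, mul_comm (Complex.normSq _) (1 - ‖x‖ ^ 2),
    div_self (ne_of_gt (mul_pos hA (normSq_wC_pos hx t)))]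

lemma ofReal_GC_mul_poissonK {x : ℂ} (hx : ‖x‖ < 1) (t : ℝ) :
    ENNReal.ofReal (GC x t) * ENNReal.ofReal (poissonK x (eC (gC x t))) = 1 := by
  rw [← ENNReal.ofReal_mul (GC_pos hx t).le, GC_mul_poissonK hx t, ENNReal.ofReal_one]

lemma gC_strictMono {x : ℂ} (hx : ‖x‖ < 1) : StrictMono (gC x) := by
  apply strictMono_of_deriv_pos
  intro t
  rw [(gC_hasDerivAt hx t).deriv]
  exact GC_pos hx t

lemma gC_continuous {x : ℂ} (hx : ‖x‖ < 1) : Continuous (gC x) :=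
  continuous_iff_continuousAt.2 fun t => (gC_hasDerivAt hx t).continuousAt

lemma gC_add_one {x : ℂ} (t : ℝ) : gC x (t + 1) = gC x t + 1 := by
  simp only [gC, eC_periodic t]
  ring

lemma gC_image {x : ℂ} (hx : ‖x‖ < 1) :
    gC x '' Ico 0 1 = Ico (gC x 0) (gC x 0 + 1) := by
  have hg1 : gC x 1 = gC x 0 + 1 := by simpa using gC_add_one (x := x) 0
  apply Subset.antisymm
  · rintro y ⟨t, ⟨ht0, ht1⟩, rfl⟩
    exact ⟨(gC_strictMono hx).monotone ht0, hg1 ▸ (gC_strictMono hx) ht1⟩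
  · rw [← hg1]
    exact intermediate_value_Ico zero_le_one (gC_continuous hx).continuousOn

lemma eC_continuous : Continuous eC :=
  Complex.continuous_exp.comp (continuous_const.mul Complex.continuous_ofReal)

/-- the pushforward of m under the Möbius map φ_x(z) = (z+x)/(1+conj(x)z)
is the measure with density the Poisson kernel P_x. -/
theorem mobius_pushforward_eq_poisson (x : ℂ) (hx : x ∈ unitDisc) :
    Measure.map (fun z : ℂ => (z + x) / (1 + (starRingEnd ℂ) x * z)) mCircle =
      mCircle.withDensity fun z => ENNReal.ofReal (poissonK x z) := by
  have habs : ‖x‖ < 1 := hx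
  set φ : ℂ → ℂ := fun z => (z + x) / (1 + (starRingEnd ℂ) x * z) with hφ
  have hφm : Measurable φ :=
    (measurable_id.add_const x).div ((measurable_id.const_mul _).const_add 1)
  have heM : Measurable eC := eC_continuous.measurable
  have hgM : Measurable (gC x) := (gC_continuous habs).measurable
  have hDm : Measurable fun z : ℂ => ENNReal.ofReal (poissonK x z) := by
    apply Measurable.ennreal_ofReal
    exact measurable_const.div
      ((continuous_norm.comp (continuous_id.sub continuous_const)).measurable.pow_const 2)
  have hmC : mCircle = Measure.map eC (volume.restrict (Ico (0:ℝ) 1)) := rfl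
  have hcomp : φ ∘ eC = eC ∘ gC x := by
    funext t
    simp only [Function.comp_apply, hφ]
    exact (eC_gC habs t).symm
  ext A hA
  have hB : MeasurableSet (eC ⁻¹' A) := heM hA
  set B : Set ℝ := eC ⁻¹' A with hBdef
  set F : ℝ → ENNReal := fun s => B.indicator 1 s * ENNReal.ofReal (poissonK x (eC s)) with hF
  -- LHS
  have hL1 : Measure.map φ mCircle A
      = volume ((gC x) ⁻¹' B ∩ Ico 0 1) := by
    rw [hmC, Measure.map_map hφm heM, hcomp, ← Measure.map_map heM hgM,
      Measure.map_apply heM hA, Measure.map_apply hgM hB, Measure.restrict_apply (hgM hB)]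
  -- change of variables
  have hf' : ∀ t ∈ Ico (0:ℝ) 1, HasFDerivWithinAt (gC x)
      ((1 : ℝ →L[ℝ] ℝ).smulRight (GC x t)) (Ico (0:ℝ) 1) t := fun t _ =>
    (gC_hasDerivAt habs t).hasFDerivAt.hasFDerivWithinAt
  have hinj : InjOn (gC x) (Ico (0:ℝ) 1) := (gC_strictMono habs).injective.injOn
  have hcv := lintegral_image_eq_lintegral_abs_det_fderiv_mul volume measurableSet_Ico hf' hinj F
  have hpt : ∀ t : ℝ, ENNReal.ofReal |((1 : ℝ →L[ℝ] ℝ).smulRight (GC x t)).det| * F (gC x t)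
      = ((gC x) ⁻¹' B).indicator 1 t := by
    intro t
    rw [ContinuousLinearMap.smulRight_one_eq_toSpanSingleton, ContinuousLinearMap.det_toSpanSingleton, abs_of_pos (GC_pos habs t), hF]
    simp only []
    by_cases ht : gC x t ∈ B
    · rw [Set.indicator_of_mem ht, Set.indicator_of_mem (mem_preimage.2 ht)]
      simp only [Pi.one_apply, one_mul]
      exact ofReal_GC_mul_poissonK habs t
    · rw [Set.indicator_of_notMem (show t ∉ gC x ⁻¹' B from ht)]
      simp [Set.indicator_of_notMem ht]
  have hFper : Function.Periodic F 1 := by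
    intro t
    have he := eC_periodic t
    simp only [hF]
    have h1 : B.indicator (1 : ℝ → ENNReal) (t + 1) = B.indicator 1 t := by
      by_cases ht : eC t ∈ A
      · rw [Set.indicator_of_mem (show t + 1 ∈ eC ⁻¹' A from by
            rw [mem_preimage, he]; exact ht),
          Set.indicator_of_mem (show t ∈ eC ⁻¹' A from ht)]
        rfl
      · rw [Set.indicator_of_notMem (show t + 1 ∉ eC ⁻¹' A from by
            rw [mem_preimage, he]; exact ht),
          Set.indicator_of_notMem (show t ∉ eC ⁻¹' A from ht)]
    rw [h1, he]
  have hfd := (isAddFundamentalDomain_Ioc one_pos (gC x 0)).setLIntegral_eq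
    (isAddFundamentalDomain_Ioc one_pos 0) F hFper.map_vadd_zmultiples
  have hR : (mCircle.withDensity fun z => ENNReal.ofReal (poissonK x z)) A
      = ∫⁻ t in Ico (0:ℝ) 1, F t ∂volume := by
    rw [withDensity_apply _ hA, hmC, setLIntegral_map hA hDm heM]
    rw [← lintegral_indicator hB]
    apply lintegral_congr
    intro t
    by_cases ht : t ∈ B <;> simp [hF, Set.indicator_apply, ht]
  calc (Measure.map φ mCircle) A
      = volume (gC x ⁻¹' B ∩ Ico 0 1) := hL1
    _ = ∫⁻ t in Ico (0:ℝ) 1, (gC x ⁻¹' B).indicator 1 t ∂volume :=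
        ((lintegral_indicator_one (hgM hB)).trans (Measure.restrict_apply (hgM hB))).symm
    _ = ∫⁻ t in Ico (0:ℝ) 1,
          ENNReal.ofReal |((1 : ℝ →L[ℝ] ℝ).smulRight (GC x t)).det| * F (gC x t) ∂volume :=
        lintegral_congr (fun t => (hpt t).symm)
    _ = ∫⁻ y in gC x '' Ico 0 1, F y ∂volume := hcv.symm
    _ = ∫⁻ y in Ico (gC x 0) (gC x 0 + 1), F y ∂volume := by rw [gC_image habs]
    _ = ∫⁻ y in Ioc (gC x 0) (gC x 0 + 1), F y ∂volume := by
        rw [Measure.restrict_congr_set Ico_ae_eq_Ioc]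
    _ = ∫⁻ y in Ioc (0:ℝ) (0 + 1), F y ∂volume := hfd
    _ = ∫⁻ y in Ico (0:ℝ) 1, F y ∂volume := by
        rw [zero_add, ← Measure.restrict_congr_set Ico_ae_eq_Ioc]
    _ = (mCircle.withDensity fun z => ENNReal.ofReal (poissonK x z)) A := hR.symm
end
end

section
/- Let x, y ∈ D. Then for every z ∈ 𝕋, |P_x(z) − P_y(z)| ≤ 12·|x − y| / ((1 − |x|)²·(1 − |y|)²); in particular the supremum over z ∈ 𝕋 of |P_x(z) − P_y(z)| is bounded by the same quantity. -/
open MeasureTheory Filter Set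

noncomputable section

/-- Lipschitz-type bound for Poisson kernels. -/
theorem poisson_diff_bound (x y : ℂ) (hx : x ∈ unitDisc) (hy : y ∈ unitDisc) :
    (∀ z ∈ unitCircle,
      |poissonK x z - poissonK y z| ≤
        12 * ‖x - y‖ / ((1 - ‖x‖) ^ 2 * (1 - ‖y‖) ^ 2)) ∧
    (⨆ z : unitCircle, |poissonK x (z : ℂ) - poissonK y (z : ℂ)|) ≤
      12 * ‖x - y‖ / ((1 - ‖x‖) ^ 2 * (1 - ‖y‖) ^ 2) := by
  have hx1 : ‖x‖ < 1 := hx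
  have hy1 : ‖y‖ < 1 := hy
  have hx0 : 0 ≤ ‖x‖ := norm_nonneg x
  have hy0 : 0 ≤ ‖y‖ := norm_nonneg y
  set d := ‖x - y‖ with hdd
  have hd0 : 0 ≤ d := norm_nonneg _
  set ca := 1 - ‖x‖ with hca
  set cb := 1 - ‖y‖ with hcb
  have hca0 : 0 < ca := by simp only [hca]; linarith
  have hcb0 : 0 < cb := by simp only [hcb]; linarith
  have hca1 : ca ≤ 1 := by simp only [hca]; linarith
  have hcb1 : cb ≤ 1 := by simp only [hcb]; linarith
  have hD : 0 < ca ^ 2 * cb ^ 2 := by positivity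
  have hxy : |‖x‖ - ‖y‖| ≤ d := by
    simpa using abs_norm_sub_norm_le x y
  have hRHS0 : 0 ≤ 12 * d / (ca ^ 2 * cb ^ 2) := by positivity
  have key : ∀ z ∈ unitCircle,
      |poissonK x z - poissonK y z| ≤ 12 * d / (ca ^ 2 * cb ^ 2) := by
    intro z hz
    have hz1 : ‖z‖ = 1 := hz
    set a := ‖z - x‖ with haa
    set b := ‖z - y‖ with hbb
    have haca : ca ≤ a := by
      have h := norm_sub_norm_le z x
      simp only [hz1] at h
      simpa [haa, hca] using h
    have hbcb : cb ≤ b := by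
      have h := norm_sub_norm_le z y
      simp only [hz1] at h
      simpa [hbb, hcb] using h
    have ha0 : 0 < a := lt_of_lt_of_le hca0 haca
    have hb0 : 0 < b := lt_of_lt_of_le hcb0 hbcb
    have ha2 : a ≤ 2 := by
      have h := norm_sub_le z x
      simp only [hz1] at h
      simp only [haa]; linarith
    have hb2 : b ≤ 2 := by
      have h := norm_sub_le z y
      simp only [hz1] at h
      simp only [hbb]; linarith
    have hab : |a - b| ≤ d := by
      have h := abs_norm_sub_norm_le (z - x) (z - y)
      have h2 : (z - x) - (z - y) = -(x - y) := by ring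
      simp only [h2, norm_neg] at h
      simpa [haa, hbb, hdd] using h
    set p := 1 - ‖x‖ ^ 2 with hp
    set q := 1 - ‖y‖ ^ 2 with hq
    have hp0 : 0 ≤ p := by nlinarith
    have hp2 : p ≤ 2 * ca := by nlinarith
    have hpq : |p - q| ≤ 2 * d := by
      have he : p - q = (‖y‖ - ‖x‖) * (‖y‖ + ‖x‖) := by
        rw [hp, hq]; ring
      rw [he, abs_mul]
      have h1 : |‖y‖ - ‖x‖| ≤ d := by rw [abs_sub_comm]; exact hxy
      have h2 : |‖y‖ + ‖x‖| ≤ 2 := by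
        rw [abs_of_nonneg (by linarith)]; linarith
      calc |‖y‖ - ‖x‖| * |‖y‖ + ‖x‖|
          ≤ d * 2 := mul_le_mul h1 h2 (abs_nonneg _) hd0
        _ = 2 * d := by ring
    have hba : |b ^ 2 - a ^ 2| ≤ 4 * d := by
      have he : b ^ 2 - a ^ 2 = (b - a) * (b + a) := by ring
      rw [he, abs_mul]
      have h1 : |b - a| ≤ d := by rw [abs_sub_comm]; exact hab
      have h2 : |b + a| ≤ 4 := by rw [abs_of_nonneg (by linarith)]; linarith
      calc |b - a| * |b + a| ≤ d * 4 := mul_le_mul h1 h2 (abs_nonneg _) hd0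
        _ = 4 * d := by ring
    have heq : p / a ^ 2 - q / b ^ 2 = p * (b ^ 2 - a ^ 2) / (a ^ 2 * b ^ 2) + (p - q) / b ^ 2 := by
      field_simp
      ring
    have hgoal : |p / a ^ 2 - q / b ^ 2| ≤ 12 * d / (ca ^ 2 * cb ^ 2) := by
      rw [heq]
      calc |p * (b ^ 2 - a ^ 2) / (a ^ 2 * b ^ 2) + (p - q) / b ^ 2|
          ≤ |p * (b ^ 2 - a ^ 2) / (a ^ 2 * b ^ 2)| + |(p - q) / b ^ 2| := abs_add_le _ _
        _ = p * |b ^ 2 - a ^ 2| / (a ^ 2 * b ^ 2) + |p - q| / b ^ 2 := by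
            rw [abs_div, abs_div, abs_mul, abs_of_nonneg hp0,
              abs_of_nonneg (by positivity : (0:ℝ) ≤ a ^ 2 * b ^ 2),
              abs_of_nonneg (by positivity : (0:ℝ) ≤ b ^ 2)]
        _ ≤ 8 * d / (ca ^ 2 * cb ^ 2) + 2 * d / (ca ^ 2 * cb ^ 2) := by
            have hnum1 : p * |b ^ 2 - a ^ 2| ≤ 8 * d := by
              have hp2' : p ≤ 2 := by linarith
              calc p * |b ^ 2 - a ^ 2| ≤ 2 * (4 * d) :=
                    mul_le_mul hp2' hba (abs_nonneg _) (by norm_num)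
                _ = 8 * d := by ring
            have hca2 : ca ^ 2 ≤ a ^ 2 := pow_le_pow_left₀ hca0.le haca 2
            have hcb2 : cb ^ 2 ≤ b ^ 2 := pow_le_pow_left₀ hcb0.le hbcb 2
            have hden1 : ca ^ 2 * cb ^ 2 ≤ a ^ 2 * b ^ 2 :=
              mul_le_mul hca2 hcb2 (by positivity) (by positivity)
            have hca21 : ca ^ 2 ≤ 1 := pow_le_one₀ hca0.le hca1
            have hden2 : ca ^ 2 * cb ^ 2 ≤ b ^ 2 := by
              calc ca ^ 2 * cb ^ 2 ≤ 1 * b ^ 2 :=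
                    mul_le_mul hca21 hcb2 (by positivity) zero_le_one
                _ = b ^ 2 := one_mul _
            gcongr ?_ + ?_
            · exact div_le_div₀ (by positivity) hnum1 hD hden1
            · exact div_le_div₀ (by positivity) hpq hD hden2
        _ = 10 * d / (ca ^ 2 * cb ^ 2) := by ring
        _ ≤ 12 * d / (ca ^ 2 * cb ^ 2) := by
            exact (div_le_div_iff_of_pos_right hD).mpr (by linarith)
    simpa [poissonK, hp, hq, haa, hbb] using hgoal
  refine ⟨key, ?_⟩
  apply Real.iSup_le _ hRHS0
  intro z
  exact key z z.2
end
end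

section
/- Let n ≥ 1, let T_1, …, T_n be finite Blaschke products, and let f : 𝕋 → ℂ be continuous. For θ ∈ 𝕋 write θT_k for the Blaschke product z ↦ θ·T_k(z) and let F_θ = (θT_n) ∘ ⋯ ∘ (θT_1). Then ∫_𝕋 ∫_𝕋 f(F_θ(z)) dm(z) dm(θ) = ∫_𝕋 f dm. -/
open MeasureTheory Filter Set

noncomputable section

/-- Composition G_{n-1} ∘ ⋯ ∘ G_0 of a finite family of self-maps of ℂ. -/
def compFam (n : ℕ) (G : Fin n → ℂ → ℂ) (z : ℂ) : ℂ :=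
  (List.ofFn G).foldl (fun w g => g w) z





abbrev φc : ℝ → ℂ := fun t => Complex.exp (2 * (Real.pi : ℂ) * Complex.I * (t : ℂ))

lemma φc_cont : Continuous φc := by
  exact Complex.continuous_exp.comp (by continuity)

lemma φc_mem (t : ℝ) : φc t ∈ unitCircle := by
  simp only [unitCircle, mem_setOf_eq, φc, Complex.norm_exp]
  have : (2 * (Real.pi : ℂ) * Complex.I * (t : ℂ)).re = 0 := by simp
  rw [this, Real.exp_zero]

lemma φc_eq_circleMap (t : ℝ) : φc t = circleMap 0 1 (2 * Real.pi * t) := by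
  simp only [circleMap_zero, Complex.ofReal_one, one_mul, φc]
  congr 1
  push_cast
  ring

lemma unitCircle_eq : unitCircle = Metric.sphere (0:ℂ) 1 := by
  ext z; simp [unitCircle, Complex.norm_def, Metric.mem_sphere, Complex.dist_eq, Complex.norm_def]

lemma isCompact_unitCircle : IsCompact unitCircle := unitCircle_eq ▸ isCompact_sphere 0 1

lemma measurableSet_unitCircle : MeasurableSet unitCircle :=
  (unitCircle_eq ▸ (Metric.isClosed_sphere).measurableSet)

instance : IsProbabilityMeasure mCircle := by
  rw [mCircle]
  have : IsProbabilityMeasure (volume.restrict (Set.Ico (0:ℝ) 1)) := by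
    constructor; simp
  exact Measure.isProbabilityMeasure_map φc_cont.measurable.aemeasurable

lemma mCircle_ae_mem : ∀ᵐ z ∂mCircle, z ∈ unitCircle := by
  exact (ae_map_iff φc_cont.measurable.aemeasurable measurableSet_unitCircle).2
    (ae_of_all _ φc_mem)

lemma mCircle_restrict : mCircle.restrict unitCircle = mCircle :=
  Measure.restrict_eq_self_of_ae_mem mCircle_ae_mem

lemma circle_interval_integral (h : ℂ → ℂ) (hd : DiffContOnCl ℂ h (Metric.ball 0 1)) :
    ∫ t in (0:ℝ)..(2*Real.pi), h (circleMap 0 1 t) = (2 * Real.pi : ℝ) • h 0 := by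
  have key := hd.circleIntegral_sub_inv_smul (Metric.mem_ball_self one_pos)
  rw [circleIntegral] at key
  have hc : ∀ t : ℝ, circleMap 0 1 t ≠ 0 := fun t => circleMap_ne_center one_ne_zero
  have : ∀ t : ℝ, deriv (circleMap 0 1) t • ((circleMap 0 1 t - 0)⁻¹ • h (circleMap 0 1 t))
      = Complex.I * h (circleMap 0 1 t) := by
    intro t
    rw [deriv_circleMap, smul_eq_mul, smul_eq_mul, sub_zero]
    field_simp
  rw [intervalIntegral.integral_congr (fun t _ => this t)] at key
  rw [intervalIntegral.integral_const_mul] at key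
  have hI : (Complex.I : ℂ) ≠ 0 := Complex.I_ne_zero
  have : Complex.I * ∫ t in (0:ℝ)..(2*Real.pi), h (circleMap 0 1 t)
      = Complex.I * ((2 * Real.pi : ℝ) • h 0) := by
    rw [key]
    rw [smul_eq_mul, Complex.real_smul]
    push_cast
    ring
  exact mul_left_cancel₀ hI this

lemma meanValue (h : ℂ → ℂ) (hd : DiffContOnCl ℂ h (Metric.ball 0 1)) :
    ∫ t in Ico (0:ℝ) 1, h (φc t) = h 0 := by
  have h2 : ∫ t in Ico (0:ℝ) 1, h (φc t)
      = ∫ t in (0:ℝ)..1, h (circleMap 0 1 (2 * Real.pi * t)) := by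
    rw [MeasureTheory.integral_Ico_eq_integral_Ioo, ← MeasureTheory.integral_Ioc_eq_integral_Ioo,
      ← intervalIntegral.integral_of_le zero_le_one]
    exact intervalIntegral.integral_congr (fun t _ => by rw [φc_eq_circleMap])
  rw [h2, intervalIntegral.integral_comp_mul_left (f := fun s => h (circleMap 0 1 s))
    (by positivity : (2*Real.pi) ≠ 0)]
  rw [mul_zero, mul_one, circle_interval_integral h hd, smul_smul]
  rw [inv_mul_cancel₀ (by positivity : (2*Real.pi) ≠ 0), one_smul]


lemma den_ne {a w : ℂ} (ha : ‖a‖ < 1) (hw : ‖w‖ ≤ 1) :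
    1 - (starRingEnd ℂ) a * w ≠ 0 := by
  intro h
  have h1 : (starRingEnd ℂ) a * w = 1 := by linear_combination -h
  have h2 : ‖(starRingEnd ℂ) a * w‖ = 1 := by rw [h1, norm_one]
  rw [norm_mul, Complex.norm_conj] at h2
  nlinarith [norm_nonneg a, norm_nonneg w]

lemma abs_num_le_den {a w : ℂ} (ha : ‖a‖ < 1) (hw : ‖w‖ ≤ 1) :
    ‖w - a‖ ≤ ‖1 - (starRingEnd ℂ) a * w‖ := by
  have h1 : Complex.normSq a < 1 := by
    rw [← Complex.sq_norm]; nlinarith [norm_nonneg a]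
  have h2 : Complex.normSq w ≤ 1 := by
    rw [← Complex.sq_norm]; nlinarith [norm_nonneg w]
  rw [Complex.norm_def, Complex.norm_def]
  apply Real.sqrt_le_sqrt
  simp only [Complex.normSq_apply, Complex.sub_re, Complex.sub_im, Complex.mul_re, Complex.mul_im,
    Complex.one_re, Complex.one_im, Complex.conj_re, Complex.conj_im] at *
  nlinarith [sq_nonneg (a.re * w.re + a.im * w.im), sq_nonneg (a.re * w.im - a.im * w.re),
    mul_nonneg (sub_nonneg.2 h1.le) (sub_nonneg.2 h2)]

lemma abs_num_eq_den {a w : ℂ} (hw : ‖w‖ = 1) :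
    ‖w - a‖ = ‖1 - (starRingEnd ℂ) a * w‖ := by
  have hww : w * (starRingEnd ℂ) w = 1 := by
    rw [Complex.mul_conj, Complex.normSq_eq_norm_sq, hw]; norm_num
  have key : w - a = w * (1 - a * (starRingEnd ℂ) w) := by linear_combination a * hww
  rw [key, norm_mul, hw, one_mul]
  have : 1 - a * (starRingEnd ℂ) w = (starRingEnd ℂ) (1 - (starRingEnd ℂ) a * w) := by
    simp [map_sub, map_mul]
  rw [this, Complex.norm_conj]

lemma blaschke_facts {m : ℕ} {S : ℂ → ℂ} (hB : IsBlaschke m S) {w : ℂ}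
    (hw : ‖w‖ ≤ 1) :
    DifferentiableAt ℂ S w ∧ ‖S w‖ ≤ 1 ∧
      (‖w‖ = 1 → ‖S w‖ = 1) := by
  obtain ⟨hm, θ₀, a, hθ, ha, hS⟩ := hB
  have hSf : S = fun z => θ₀ * ∏ i, (z - a i) / (1 - (starRingEnd ℂ) (a i) * z) := funext hS
  refine ⟨?_, ?_, ?_⟩
  · rw [hSf]
    apply DifferentiableAt.const_mul
    apply DifferentiableAt.fun_finsetProd
    intro i _
    exact ((differentiableAt_id.sub (differentiableAt_const _)).div
      ((differentiableAt_const _).sub ((differentiableAt_const _).mul differentiableAt_id))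
      (den_ne (ha i) hw))
  · rw [hS, norm_mul, hθ, one_mul]
    rw [norm_prod]
    apply Finset.prod_le_one (fun i _ => norm_nonneg _)
    intro i _
    rw [norm_div]
    exact div_le_one_of_le₀ (abs_num_le_den (ha i) hw)
      (norm_nonneg _)
  · intro hw1
    rw [hS, norm_mul, hθ, one_mul, norm_prod]
    apply Finset.prod_eq_one
    intro i _
    rw [norm_div, abs_num_eq_den hw1, div_self]
    exact (norm_ne_zero_iff).2 (den_ne (ha i) hw)


lemma compFam_zero' (G : Fin 0 → ℂ → ℂ) (z : ℂ) : compFam 0 G z = z := rfl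

lemma compFam_succ (n : ℕ) (G : Fin (n+1) → ℂ → ℂ) (z : ℂ) :
    compFam (n+1) G z = compFam n (fun k => G k.succ) (G 0 z) := by
  simp [compFam, List.ofFn_succ, Function.comp_def]

lemma compFam_zero_mul (n : ℕ) (T : Fin (n+1) → ℂ → ℂ) (z : ℂ) :
    compFam (n+1) (fun k w => (0:ℂ) * T k w) z = 0 := by
  induction n generalizing z with
  | zero => simp [compFam_succ, compFam_zero']
  | succ m ih =>
    rw [compFam_succ]
    exact ih (fun k => T k.succ) _

lemma compFam_facts : ∀ (n : ℕ) (T : Fin n → ℂ → ℂ) (deg : Fin n → ℕ),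
    (∀ k, IsBlaschke (deg k) (T k)) → ∀ (θ z : ℂ), ‖θ‖ ≤ 1 → ‖z‖ ≤ 1 →
    DifferentiableAt ℂ (fun p : ℂ × ℂ => compFam n (fun k w => p.1 * T k w) p.2) (θ, z) ∧
    ‖compFam n (fun k w => θ * T k w) z‖ ≤ 1 ∧
    (‖θ‖ = 1 → ‖z‖ = 1 →
      ‖compFam n (fun k w => θ * T k w) z‖ = 1) := by
  intro n
  induction n with
  | zero =>
    intro T deg hB θ z hθ hz
    refine ⟨?_, by simpa [compFam_zero'], fun _ h => by simpa [compFam_zero']⟩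
    simp only [compFam_zero']
    exact differentiableAt_snd
  | succ m ih =>
    intro T deg hB θ z hθ hz
    have bf := blaschke_facts (hB 0) hz
    have hw' : ‖θ * T 0 z‖ ≤ 1 := by
      rw [norm_mul]
      exact mul_le_one₀ hθ (norm_nonneg _) bf.2.1
    have ihs := ih (fun k => T k.succ) (fun k => deg k.succ) (fun k => hB k.succ)
      θ (θ * T 0 z) hθ hw'
    refine ⟨?_, ?_, ?_⟩
    · have heq : (fun p : ℂ × ℂ => compFam (m+1) (fun k w => p.1 * T k w) p.2)
          = (fun p : ℂ × ℂ => compFam m (fun k w => p.1 * T k.succ w) p.2)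
            ∘ (fun p : ℂ × ℂ => (p.1, p.1 * T 0 p.2)) := by
        funext p; simp [compFam_succ]
      rw [heq]
      exact DifferentiableAt.comp (θ, z) ihs.1
        (DifferentiableAt.prodMk differentiableAt_fst
          (differentiableAt_fst.mul (bf.1.comp (θ, z) differentiableAt_snd)))
    · rw [compFam_succ]
      exact ihs.2.1
    · intro hθ1 hz1
      rw [compFam_succ]
      exact ihs.2.2 hθ1 (by rw [norm_mul, hθ1, bf.2.2 hz1, one_mul])

lemma gz_diffContOnCl (n : ℕ) (T : Fin n → ℂ → ℂ) (deg : Fin n → ℕ)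
    (hB : ∀ k, IsBlaschke (deg k) (T k)) {z : ℂ} (hz : ‖z‖ ≤ 1) :
    DiffContOnCl ℂ (fun θ => compFam n (fun k w => θ * T k w) z) (Metric.ball 0 1) := by
  have hdiff : ∀ θ ∈ Metric.closedBall (0:ℂ) 1,
      DifferentiableAt ℂ (fun θ => compFam n (fun k w => θ * T k w) z) θ := by
    intro θ hθ
    have hθ' : ‖θ‖ ≤ 1 := by
      rwa [Metric.mem_closedBall, Complex.dist_eq, sub_zero] at hθ
    exact ((compFam_facts n T deg hB θ z hθ' hz).1).comp (f := fun θ : ℂ => (θ, z)) θ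
      (differentiableAt_id.prodMk (differentiableAt_const z))
  constructor
  · exact fun θ hθ =>
      (hdiff θ (Metric.ball_subset_closedBall hθ)).differentiableWithinAt
  · rw [closure_ball (0:ℂ) one_ne_zero]
    exact fun θ hθ => (hdiff θ hθ).continuousAt.continuousWithinAt

lemma integrableOn_comp_cont {F : ℝ → ℂ} (hF : Continuous F) :
    IntegrableOn F (Ico (0:ℝ) 1) volume :=
  (hF.integrableOn_Icc (a := 0) (b := 1)).mono_set Ico_subset_Icc_self

lemma monomial_int_ge {h : ℂ → ℂ} (hd : DiffContOnCl ℂ h (Metric.ball 0 1)) (h0 : h 0 = 0)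
    (hm : ∀ z ∈ unitCircle, h z ∈ unitCircle) {j k : ℕ} (hkj : k ≤ j) :
    ∫ t in Ico (0:ℝ) 1, (h (φc t))^j * (starRingEnd ℂ) (h (φc t))^k = (0:ℂ)^(j-k) := by
  have hpoint : ∀ t : ℝ, (h (φc t))^j * (starRingEnd ℂ) (h (φc t))^k = (h (φc t))^(j-k) := by
    intro t
    have h1 : ‖h (φc t)‖ = 1 := hm _ (φc_mem t)
    have h2 : h (φc t) * (starRingEnd ℂ) (h (φc t)) = 1 := by
      rw [Complex.mul_conj, Complex.normSq_eq_norm_sq, h1]; norm_num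
    calc (h (φc t))^j * (starRingEnd ℂ) (h (φc t))^k
        = (h (φc t))^(j-k) * (h (φc t) * (starRingEnd ℂ) (h (φc t)))^k := by
          rw [mul_pow, ← mul_assoc, ← pow_add, Nat.sub_add_cancel hkj]
      _ = (h (φc t))^(j-k) := by rw [h2, one_pow, mul_one]
  rw [setIntegral_congr_fun measurableSet_Ico (fun t _ => hpoint t)]
  have hd' : DiffContOnCl ℂ (fun θ => (h θ)^(j-k)) (Metric.ball 0 1) :=
    ⟨hd.differentiableOn.pow _, hd.continuousOn.pow _⟩
  rw [meanValue _ hd', h0]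

lemma monomial_int {h : ℂ → ℂ} (hd : DiffContOnCl ℂ h (Metric.ball 0 1)) (h0 : h 0 = 0)
    (hm : ∀ z ∈ unitCircle, h z ∈ unitCircle) (j k : ℕ) :
    ∫ t in Ico (0:ℝ) 1, (h (φc t))^j * (starRingEnd ℂ) (h (φc t))^k
      = if j = k then 1 else 0 := by
  rcases le_or_gt k j with hkj | hjk
  · rw [monomial_int_ge hd h0 hm hkj]
    rcases eq_or_lt_of_le hkj with rfl | hlt
    · simp
    · rw [if_neg (by omega), zero_pow (by omega)]
  · have hpoint : ∀ t : ℝ, (h (φc t))^j * (starRingEnd ℂ) (h (φc t))^k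
        = (starRingEnd ℂ) ((h (φc t))^k * (starRingEnd ℂ) (h (φc t))^j) := by
      intro t
      rw [map_mul, map_pow, map_pow, Complex.conj_conj, mul_comm]
    rw [setIntegral_congr_fun measurableSet_Ico (fun t _ => hpoint t), integral_conj,
      monomial_int_ge hd h0 hm hjk.le, zero_pow (by omega), map_zero, if_neg (by omega)]

instance : CompactSpace ↥unitCircle := isCompact_iff_compactSpace.1 isCompact_unitCircle

instance : IsProbabilityMeasure (volume.restrict (Ico (0:ℝ) 1)) := ⟨by simp⟩

lemma integral_lipschitz {γ : ℝ → ↥unitCircle} (hγ : Continuous γ) :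
    LipschitzWith 1 (fun u : C(↥unitCircle, ℂ) => ∫ t in Ico (0:ℝ) 1, u (γ t)) := by
  apply LipschitzWith.of_dist_le_mul
  intro u v
  simp only [NNReal.coe_one, one_mul]
  rw [dist_eq_norm]
  have hu : IntegrableOn (fun t => u (γ t)) (Ico (0:ℝ) 1) volume :=
    integrableOn_comp_cont (u.continuous.comp hγ)
  have hv : IntegrableOn (fun t => v (γ t)) (Ico (0:ℝ) 1) volume :=
    integrableOn_comp_cont (v.continuous.comp hγ)
  rw [← integral_sub hu hv]
  have hb : ∀ t : ℝ, ‖u (γ t) - v (γ t)‖ ≤ dist u v := by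
    intro t
    rw [← dist_eq_norm]
    exact ContinuousMap.dist_apply_le_dist _
  calc ‖∫ t in Ico (0:ℝ) 1, (u (γ t) - v (γ t))‖
      ≤ dist u v * ((volume.restrict (Ico (0:ℝ) 1)) univ).toReal :=
        norm_integral_le_of_norm_le_const (ae_of_all _ hb)
    _ = dist u v := by simp

lemma transfer {h : ℂ → ℂ} (hd : DiffContOnCl ℂ h (Metric.ball 0 1)) (h0 : h 0 = 0)
    (hm : ∀ z ∈ unitCircle, h z ∈ unitCircle) {f : ℂ → ℂ} (hf : ContinuousOn f unitCircle) :
    ∫ t in Ico (0:ℝ) 1, f (h (φc t)) = ∫ t in Ico (0:ℝ) 1, f (φc t) := by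
  have hsub : unitCircle ⊆ Metric.closedBall (0:ℂ) 1 := by
    intro z hz
    rw [Metric.mem_closedBall, Complex.dist_eq, sub_zero]
    exact le_of_eq hz
  have hch : ContinuousOn h unitCircle := by
    have := hd.continuousOn
    rw [closure_ball (0:ℂ) one_ne_zero] at this
    exact this.mono hsub
  have hγhc : Continuous fun t : ℝ => h (φc t) :=
    hch.comp_continuous φc_cont φc_mem
  set γh : ℝ → ↥unitCircle := fun t => ⟨h (φc t), hm _ (φc_mem t)⟩ with hγh_def
  have hγh : Continuous γh := hγhc.subtype_mk _
  set γi : ℝ → ↥unitCircle := fun t => ⟨φc t, φc_mem t⟩ with hγi_def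
  have hγi : Continuous γi := φc_cont.subtype_mk _
  set S : Set C(↥unitCircle, ℂ) :=
    {u | ∫ t in Ico (0:ℝ) 1, u (γh t) = ∫ t in Ico (0:ℝ) 1, u (γi t)} with hS_def
  have hSclosed : IsClosed S :=
    isClosed_eq (integral_lipschitz hγh).continuous (integral_lipschitz hγi).continuous
  set Xc : C(↥unitCircle, ℂ) := (ContinuousMap.id ℂ).restrict unitCircle with hXc_def
  set A : StarSubalgebra ℂ C(↥unitCircle, ℂ) := StarAlgebra.adjoin ℂ {Xc} with hA_def
  have hSep : A.SeparatesPoints := by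
    intro x y hxy
    exact ⟨Xc, ⟨Xc, StarAlgebra.subset_adjoin ℂ {Xc} rfl, rfl⟩,
      Subtype.coe_injective.ne hxy⟩
  have hDense := ContinuousMap.starSubalgebra_topologicalClosure_eq_top_of_separatesPoints A hSep
  -- monomials are in S
  have hid_facts : ∀ (j k : ℕ), (Xc^j * star Xc^k) ∈ S := by
    intro j k
    have happ : ∀ (x : ↥unitCircle), (Xc^j * star Xc^k) x = (x:ℂ)^j * (starRingEnd ℂ) (x:ℂ)^k := by
      intro x
      simp [hXc_def, Complex.star_def]
    have hid : ∀ z ∈ unitCircle, (id : ℂ → ℂ) z ∈ unitCircle := fun z hz => hz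
    have hdid : DiffContOnCl ℂ (id : ℂ → ℂ) (Metric.ball 0 1) :=
      differentiable_id.diffContOnCl
    show (∫ t in Ico (0:ℝ) 1, (Xc^j * star Xc^k) (γh t))
        = ∫ t in Ico (0:ℝ) 1, (Xc^j * star Xc^k) (γi t)
    calc (∫ t in Ico (0:ℝ) 1, (Xc^j * star Xc^k) (γh t))
        = ∫ t in Ico (0:ℝ) 1, (h (φc t))^j * (starRingEnd ℂ) (h (φc t))^k := by
          apply setIntegral_congr_fun measurableSet_Ico
          intro t _
          simpa using happ (γh t)
      _ = if j = k then 1 else 0 := monomial_int hd h0 hm j k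
      _ = ∫ t in Ico (0:ℝ) 1, ((id (φc t)):ℂ)^j * (starRingEnd ℂ) (id (φc t))^k :=
          (monomial_int hdid rfl hid j k).symm
      _ = ∫ t in Ico (0:ℝ) 1, (Xc^j * star Xc^k) (γi t) := by
          apply setIntegral_congr_fun measurableSet_Ico
          intro t _
          simpa using (happ (γi t)).symm
  have hAS : (A : Set C(↥unitCircle, ℂ)) ⊆ S := by
    intro u hu
    have hu' : u ∈ Submodule.span ℂ (Submonoid.closure ({Xc} ∪ star {Xc}) : Set C(↥unitCircle, ℂ)) := by
      have := StarAlgebra.adjoin_eq_span (R := ℂ) ({Xc} : Set C(↥unitCircle, ℂ))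
      rw [← this]
      exact hu
    refine Submodule.span_induction ?mem ?zero ?add ?smul hu'
    · -- elements of the monoid closure
      intro w hw
      have : ∃ j k : ℕ, w = Xc^j * star Xc^k := by
        refine Submonoid.closure_induction ?base ?one ?mul hw
        · intro x hx
          rcases hx with hx | hx
          · exact ⟨1, 0, by simp [Set.mem_singleton_iff.1 hx]⟩
          · refine ⟨0, 1, ?_⟩
            rw [Set.mem_star, Set.mem_singleton_iff] at hx
            simp [← hx]
        · exact ⟨0, 0, by simp⟩
        · rintro x y hx hy ⟨j1, k1, rfl⟩ ⟨j2, k2, rfl⟩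
          exact ⟨j1 + j2, k1 + k2, by rw [pow_add, pow_add]; ring⟩
      obtain ⟨j, k, rfl⟩ := this
      exact hid_facts j k
    · show (∫ t in Ico (0:ℝ) 1, (0 : C(↥unitCircle, ℂ)) (γh t))
        = ∫ t in Ico (0:ℝ) 1, (0 : C(↥unitCircle, ℂ)) (γi t)
      simp
    · intro u v _ _ hus hvs
      have h1 : IntegrableOn (fun t => u (γh t)) (Ico (0:ℝ) 1) volume :=
        integrableOn_comp_cont (u.continuous.comp hγh)
      have h2 : IntegrableOn (fun t => v (γh t)) (Ico (0:ℝ) 1) volume :=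
        integrableOn_comp_cont (v.continuous.comp hγh)
      have h3 : IntegrableOn (fun t => u (γi t)) (Ico (0:ℝ) 1) volume :=
        integrableOn_comp_cont (u.continuous.comp hγi)
      have h4 : IntegrableOn (fun t => v (γi t)) (Ico (0:ℝ) 1) volume :=
        integrableOn_comp_cont (v.continuous.comp hγi)
      show (∫ t in Ico (0:ℝ) 1, (u + v) (γh t)) = ∫ t in Ico (0:ℝ) 1, (u + v) (γi t)
      simp only [ContinuousMap.add_apply]
      rw [integral_add h1 h2, integral_add h3 h4, hus, hvs]
    · intro c u _ hus
      show (∫ t in Ico (0:ℝ) 1, (c • u) (γh t)) = ∫ t in Ico (0:ℝ) 1, (c • u) (γi t)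
      simp only [ContinuousMap.smul_apply]
      rw [integral_smul, integral_smul, hus]
  -- conclude
  have hfc : Continuous (unitCircle.restrict f) := hf.restrict
  set fc : C(↥unitCircle, ℂ) := ⟨unitCircle.restrict f, hfc⟩ with hfc_def
  have hfcS : fc ∈ S := by
    have h1 : fc ∈ (A.topologicalClosure : Set C(↥unitCircle, ℂ)) := by
      rw [hDense]; trivial
    rw [StarSubalgebra.topologicalClosure_coe] at h1
    exact closure_minimal hAS hSclosed h1
  exact hfcS

lemma compFam_zero_mul' {n : ℕ} (hn : 1 ≤ n) (T : Fin n → ℂ → ℂ) (z : ℂ) :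
    compFam n (fun k w => (0:ℂ) * T k w) z = 0 := by
  obtain ⟨m, rfl⟩ : ∃ m, n = m + 1 := ⟨n - 1, by omega⟩
  exact compFam_zero_mul m T z

lemma integral_mCircle {F : ℂ → ℂ} (hF : ContinuousOn F unitCircle) :
    ∫ z, F z ∂mCircle = ∫ t in Ico (0:ℝ) 1, F (φc t) := by
  have hFm : AEStronglyMeasurable F mCircle := by
    have := hF.aestronglyMeasurable measurableSet_unitCircle (μ := mCircle)
    rwa [mCircle_restrict] at this
  exact integral_map φc_cont.measurable.aemeasurable hFm


/-- averaging a rotated composition of Blaschke products over θ ∈ 𝕋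
recovers the Lebesgue integral. -/
theorem average_rotated_composition (n : ℕ) (hn : 1 ≤ n)
    (T : Fin n → ℂ → ℂ) (deg : Fin n → ℕ) (hB : ∀ k, IsBlaschke (deg k) (T k))
    (f : ℂ → ℂ) (hf : ContinuousOn f unitCircle) :
    ∫ θ, (∫ z, f (compFam n (fun k w => θ * T k w) z) ∂mCircle) ∂mCircle =
      ∫ z, f z ∂mCircle := by
  have hTT : MeasurableSet (unitCircle ×ˢ unitCircle) :=
    measurableSet_unitCircle.prod measurableSet_unitCircle
  -- joint continuity of the composition on 𝕋 × 𝕋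
  have hsub1 : ∀ z ∈ unitCircle, ‖z‖ ≤ 1 := fun z hz => le_of_eq hz
  have hinner_cont : ContinuousOn
      (fun p : ℂ × ℂ => compFam n (fun k w => p.1 * T k w) p.2) (unitCircle ×ˢ unitCircle) := by
    rintro ⟨θ, z⟩ hp
    exact ((compFam_facts n T deg hB θ z (hsub1 _ hp.1) (hsub1 _ hp.2)).1).continuousAt.continuousWithinAt
  have hinner_maps : MapsTo (fun p : ℂ × ℂ => compFam n (fun k w => p.1 * T k w) p.2)
      (unitCircle ×ˢ unitCircle) unitCircle := by
    rintro ⟨θ, z⟩ hp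
    exact (compFam_facts n T deg hB θ z (hsub1 _ hp.1) (hsub1 _ hp.2)).2.2 hp.1 hp.2
  have hg_contOn : ContinuousOn
      (fun p : ℂ × ℂ => f (compFam n (fun k w => p.1 * T k w) p.2)) (unitCircle ×ˢ unitCircle) :=
    hf.comp hinner_cont hinner_maps
  -- the product measure is concentrated on 𝕋 × 𝕋
  have hae_prod : ∀ᵐ p ∂(mCircle.prod mCircle), p ∈ unitCircle ×ˢ unitCircle := by
    have h1 : mCircle unitCircleᶜ = 0 := by
      have := mCircle_ae_mem
      rwa [ae_iff] at this
    have hc : (unitCircle ×ˢ unitCircle)ᶜ ⊆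
        (unitCircleᶜ ×ˢ (univ : Set ℂ)) ∪ ((univ : Set ℂ) ×ˢ unitCircleᶜ) := by
      rintro ⟨a, b⟩ hab
      simp only [mem_compl_iff, mem_prod, not_and_or] at hab
      rcases hab with h | h
      · exact Or.inl ⟨h, trivial⟩
      · exact Or.inr ⟨trivial, h⟩
    rw [ae_iff]
    refine measure_mono_null (fun p hp => hc hp) ?_
    apply le_antisymm _ (by positivity)
    calc (mCircle.prod mCircle) ((unitCircleᶜ ×ˢ (univ : Set ℂ)) ∪ ((univ : Set ℂ) ×ˢ unitCircleᶜ))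
        ≤ (mCircle.prod mCircle) (unitCircleᶜ ×ˢ (univ : Set ℂ))
          + (mCircle.prod mCircle) ((univ : Set ℂ) ×ˢ unitCircleᶜ) := measure_union_le _ _
      _ = 0 := by rw [Measure.prod_prod, Measure.prod_prod, h1]; simp
  have hgm : AEStronglyMeasurable
      (fun p : ℂ × ℂ => f (compFam n (fun k w => p.1 * T k w) p.2)) (mCircle.prod mCircle) := by
    have := hg_contOn.aestronglyMeasurable hTT (μ := mCircle.prod mCircle)
    rwa [Measure.restrict_eq_self_of_ae_mem hae_prod] at this
  -- integrability on the product
  have hInt : Integrable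
      (Function.uncurry fun θ z => f (compFam n (fun k w => θ * T k w) z))
      (mCircle.prod mCircle) := by
    have hψ : Measurable (fun t : ℝ => φc t) := φc_cont.measurable
    have hprod_map : mCircle.prod mCircle
        = Measure.map (Prod.map φc φc)
            ((volume.restrict (Ico (0:ℝ) 1)).prod (volume.restrict (Ico (0:ℝ) 1))) := by
      rw [← Measure.map_prod_map _ _ hψ hψ]
      rfl
    rw [show (Function.uncurry fun θ z => f (compFam n (fun k w => θ * T k w) z))
        = fun p : ℂ × ℂ => f (compFam n (fun k w => p.1 * T k w) p.2) from rfl]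
    rw [hprod_map]
    rw [integrable_map_measure (by rwa [← hprod_map]) (hψ.prodMap hψ).aemeasurable]
    have hcomp : Continuous ((fun p : ℂ × ℂ => f (compFam n (fun k w => p.1 * T k w) p.2))
        ∘ (Prod.map φc φc)) := by
      apply hg_contOn.comp_continuous (φc_cont.prodMap φc_cont)
      intro q
      exact ⟨φc_mem q.1, φc_mem q.2⟩
    rw [Measure.prod_restrict, ← Measure.volume_eq_prod]
    exact (hcomp.continuousOn.integrableOn_compact (isCompact_Icc.prod isCompact_Icc)).mono_set
      (prod_mono Ico_subset_Icc_self Ico_subset_Icc_self)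
  rw [integral_integral_swap hInt]
  -- evaluate the inner integral for a.e. z
  have hconst : ∀ᵐ z ∂mCircle,
      (∫ θ, f (compFam n (fun k w => θ * T k w) z) ∂mCircle)
        = ∫ t in Ico (0:ℝ) 1, f (φc t) := by
    filter_upwards [mCircle_ae_mem] with z hz
    have hz1 : ‖z‖ ≤ 1 := le_of_eq hz
    have hd := gz_diffContOnCl n T deg hB hz1
    have hmz : ∀ θ ∈ unitCircle, compFam n (fun k w => θ * T k w) z ∈ unitCircle :=
      fun θ hθ => (compFam_facts n T deg hB θ z (le_of_eq hθ) hz1).2.2 hθ hz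
    have h0 : compFam n (fun k w => (0:ℂ) * T k w) z = 0 := compFam_zero_mul' hn T z
    have hcontθ : ContinuousOn (fun θ => f (compFam n (fun k w => θ * T k w) z)) unitCircle := by
      apply hf.comp _ hmz
      intro θ hθ
      exact (((compFam_facts n T deg hB θ z (le_of_eq hθ) hz1).1).comp (f := fun θ : ℂ => (θ, z)) θ
        (differentiableAt_id.prodMk (differentiableAt_const z))).continuousAt.continuousWithinAt
    rw [integral_mCircle hcontθ]
    exact transfer hd h0 hmz hf
  rw [integral_congr_ae hconst, integral_const, probReal_univ, one_smul,
    integral_mCircle hf]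
end
end

section
/- Let (Ω, F, ℙ) be a probability space, σ : Ω → Ω an invertible, ergodic, ℙ-preserving transformation, and (T_ω)_{ω∈Ω} a Blaschke product cocycle such that ω ↦ inf_{z∈𝕋}|T_ω'(z)| is measurable, ω ↦ log inf_{z∈𝕋}|T_ω'(z)| is ℙ-integrable, and ∫_Ω log inf_{z∈𝕋}|T_ω'(z)| dℙ(ω) > 0. Then for every arc A ⊂ 𝕋 with 0 < m(A) < 1 and ℙ-a.e. ω ∈ Ω, there exists n_c(ω) ∈ ℕ such that for every n ≥ n_c(ω), m(T_{σ^{−n}ω}^{(n)}(A)) = 1. -/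
open MeasureTheory Filter Set

noncomputable section

def Ecirc (t : ℝ) : ℂ := Complex.exp (2 * (Real.pi : ℂ) * Complex.I * (t : ℂ))

lemma Ecirc_eq (t : ℝ) : Ecirc t = Complex.exp (((2 * Real.pi * t : ℝ) : ℂ) * Complex.I) := by
  unfold Ecirc; congr 1; push_cast; ring

lemma abs_Ecirc (t : ℝ) : ‖Ecirc t‖ = 1 := by
  rw [Ecirc_eq]; exact Complex.norm_exp_ofReal_mul_I _

lemma Ecirc_ne_zero (t : ℝ) : Ecirc t ≠ 0 := Complex.exp_ne_zero _

lemma Ecirc_add (s t : ℝ) : Ecirc (s + t) = Ecirc s * Ecirc t := by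
  unfold Ecirc; rw [← Complex.exp_add]; congr 1; push_cast; ring

lemma Ecirc_zero : Ecirc 0 = 1 := by simp [Ecirc]

lemma Ecirc_int (t : ℝ) (k : ℤ) : Ecirc (t + k) = Ecirc t := by
  rw [Ecirc_add]
  have : Ecirc (k : ℝ) = 1 := by
    unfold Ecirc
    rw [show 2 * (Real.pi : ℂ) * Complex.I * ((k : ℝ) : ℂ) = (k : ℂ) * (2 * Real.pi * Complex.I) by push_cast; ring]
    exact Complex.exp_int_mul_two_pi_mul_I k
  rw [this, mul_one]

lemma hasDerivAt_Ecirc (t : ℝ) :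
    HasDerivAt Ecirc (2 * (Real.pi : ℂ) * Complex.I * Ecirc t) t := by
  have h1 : HasDerivAt (fun z : ℂ => Complex.exp (2 * (Real.pi : ℂ) * Complex.I * z))
      (2 * (Real.pi : ℂ) * Complex.I * Ecirc t) (t : ℂ) := by
    simpa [Ecirc, mul_comm] using ((hasDerivAt_id (t : ℂ)).const_mul
      (2 * (Real.pi : ℂ) * Complex.I)).cexp
  exact h1.comp_ofReal

lemma continuous_Ecirc : Continuous Ecirc := by
  unfold Ecirc; fun_prop

lemma Ecirc_surj {z : ℂ} (hz : ‖z‖ = 1) (u : ℝ) :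
    ∃ t ∈ Set.Ico u (u + 1), Ecirc t = z := by
  set t₀ : ℝ := Complex.arg z / (2 * Real.pi)
  have hE0 : Ecirc t₀ = z := by
    rw [Ecirc_eq]
    have hπ : (2 * Real.pi) ≠ 0 := by positivity
    rw [show 2 * Real.pi * t₀ = Complex.arg z by simp only [t₀]; field_simp]
    simpa [hz] using Complex.norm_mul_exp_arg_mul_I z
  have h1 : (0 : ℝ) < 1 := one_pos
  refine ⟨toIcoMod h1 u t₀, toIcoMod_mem_Ico h1 u t₀ |>.imp id (by simp), ?_⟩
  have hsub : t₀ - toIcoMod h1 u t₀ = (toIcoDiv h1 u t₀ : ℤ) • (1:ℝ) := self_sub_toIcoMod h1 u t₀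
  have : toIcoMod h1 u t₀ = t₀ + (-(toIcoDiv h1 u t₀) : ℤ) := by
    push_cast
    simp only [zsmul_eq_mul, mul_one] at hsub
    linarith
  rw [this, Ecirc_int, hE0]


/-- The real "angular derivative" sum. -/
def phiB {n : ℕ} (a : Fin n → ℂ) (z : ℂ) : ℝ :=
  ∑ i, (1 - Complex.normSq (a i)) / Complex.normSq (z - a i)

section factor
variable {α z : ℂ}

lemma den_ne_zero (hα : ‖α‖ < 1) (hz : ‖z‖ = 1) :
    1 - (starRingEnd ℂ) α * z ≠ 0 := by
  intro h
  have h1 : (starRingEnd ℂ) α * z = 1 := by linear_combination -h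
  have : ‖(starRingEnd ℂ) α * z‖ = 1 := by rw [h1]; simp
  rw [norm_mul, Complex.norm_conj, hz, mul_one] at this
  exact absurd this (ne_of_lt hα)

lemma sub_ne_zero' (hα : ‖α‖ < 1) (hz : ‖z‖ = 1) : z - α ≠ 0 := by
  intro h
  have : z = α := by linear_combination h
  rw [this] at hz; exact absurd hz (ne_of_lt hα)

lemma z_ne_zero (hz : ‖z‖ = 1) : z ≠ 0 := by
  intro h; rw [h] at hz; simp at hz

lemma mul_conj_one (hz : ‖z‖ = 1) : z * (starRingEnd ℂ) z = 1 := by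
  rw [Complex.mul_conj]; norm_cast; rw [Complex.normSq_eq_norm_sq, hz]; norm_num

lemma den_eq (hz : ‖z‖ = 1) :
    1 - (starRingEnd ℂ) α * z = z * (starRingEnd ℂ) (z - α) := by
  rw [map_sub, mul_sub, mul_conj_one hz]; ring

lemma hasDerivAt_factor (hα : ‖α‖ < 1) (hz : ‖z‖ = 1) :
    HasDerivAt (fun w => (w - α) / (1 - (starRingEnd ℂ) α * w))
      (((1 : ℂ) - Complex.normSq α) / (1 - (starRingEnd ℂ) α * z) ^ 2) z := by
  have hnum : HasDerivAt (fun w : ℂ => w - α) 1 z := (hasDerivAt_id z).sub_const α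
  have hden : HasDerivAt (fun w : ℂ => 1 - (starRingEnd ℂ) α * w) (-(starRingEnd ℂ) α) z := by
    simpa using ((hasDerivAt_id z).const_mul ((starRingEnd ℂ) α)).const_sub 1
  have := hnum.div hden (den_ne_zero hα hz)
  refine this.congr_deriv ?_
  have hαα : (starRingEnd ℂ) α * α = (Complex.normSq α : ℂ) := by
    rw [mul_comm, Complex.mul_conj]
  linear_combination (-1 / (1 - (starRingEnd ℂ) α * z) ^ 2) * hαα

lemma key_factor (hα : ‖α‖ < 1) (hz : ‖z‖ = 1) :
    z * (((1 : ℂ) - Complex.normSq α) / (1 - (starRingEnd ℂ) α * z) ^ 2) =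
      (((1 - Complex.normSq α) / Complex.normSq (z - α) : ℝ) : ℂ) *
        ((z - α) / (1 - (starRingEnd ℂ) α * z)) := by
  have hza : z - α ≠ 0 := sub_ne_zero' hα hz
  have hcza : (starRingEnd ℂ) (z - α) ≠ 0 := fun h => hza (by simpa using congrArg (starRingEnd ℂ) h)
  have hz0 : z ≠ 0 := z_ne_zero hz
  have hnsq : ((Complex.normSq (z - α) : ℝ) : ℂ) = (z - α) * (starRingEnd ℂ) (z - α) :=
    (Complex.mul_conj _).symm
  have hd : z * (starRingEnd ℂ) (z - α) ≠ 0 := mul_ne_zero hz0 hcza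
  rw [den_eq hz]
  push_cast
  rw [hnsq, mul_div_assoc', div_mul_div_comm,
    div_eq_div_iff (pow_ne_zero 2 hd) (mul_ne_zero (mul_ne_zero hza hcza) hd)]
  ring

lemma abs_factor (hα : ‖α‖ < 1) (hz : ‖z‖ = 1) :
    ‖(z - α) / (1 - (starRingEnd ℂ) α * z)‖ = 1 := by
  rw [norm_div, den_eq hz, norm_mul, hz, Complex.norm_conj, one_mul]
  exact div_self (by simpa [norm_ne_zero_iff] using sub_ne_zero' hα hz)

end factor

section blaschke
variable {n : ℕ} {θ₀ : ℂ} {a : Fin n → ℂ} {B : ℂ → ℂ}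

lemma phiB_pos (hn : 1 ≤ n) (ha : ∀ i, ‖a i‖ < 1) {z : ℂ}
    (hz : ‖z‖ = 1) : 0 < phiB a z := by
  have : Nonempty (Fin n) := ⟨⟨0, hn⟩⟩
  refine Finset.sum_pos (fun i _ => ?_) Finset.univ_nonempty
  apply div_pos
  · have := ha i; rw [← Complex.sq_norm]; nlinarith [norm_nonneg (a i)]
  · rw [Complex.normSq_pos]; exact sub_ne_zero' (ha i) hz

lemma phiB_nonneg (ha : ∀ i, ‖a i‖ < 1) {z : ℂ} : 0 ≤ phiB a z := by
  refine Finset.sum_nonneg fun i _ => div_nonneg ?_ (Complex.normSq_nonneg _)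
  have := ha i; rw [← Complex.sq_norm]; nlinarith [norm_nonneg (a i)]

/-- Main pointwise structure of a Blaschke product on the circle. -/
lemma blaschke_main (hn : 1 ≤ n) (hθ : ‖θ₀‖ = 1) (ha : ∀ i, ‖a i‖ < 1)
    (hBeq : ∀ z : ℂ, B z = θ₀ * ∏ i, (z - a i) / (1 - (starRingEnd ℂ) (a i) * z))
    {z : ℂ} (hz : ‖z‖ = 1) :
    ∃ D : ℂ, HasDerivAt B D z ∧ z * D = (phiB a z : ℂ) * B z ∧
      ‖D‖ = phiB a z ∧ ‖B z‖ = 1 := by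
  classical
  set f : Fin n → ℂ → ℂ := fun i w => (w - a i) / (1 - (starRingEnd ℂ) (a i) * w) with hf
  set f' : Fin n → ℂ := fun i => ((1 : ℂ) - Complex.normSq (a i)) / (1 - (starRingEnd ℂ) (a i) * z) ^ 2
  have hprod : HasDerivAt (fun w => ∏ i, f i w) (∑ i, (∏ j ∈ Finset.univ.erase i, f j z) • f' i) z :=
    HasDerivAt.fun_finsetProd (fun i _ => hasDerivAt_factor (ha i) hz)
  have hBd : HasDerivAt B (θ₀ * ∑ i, (∏ j ∈ Finset.univ.erase i, f j z) • f' i) z := by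
    have := hprod.const_mul θ₀
    refine HasDerivAt.congr_of_eventuallyEq this (Eventually.of_forall fun w => (hBeq w))
  have habsB : ‖B z‖ = 1 := by
    rw [hBeq z, norm_mul, hθ, one_mul, norm_prod]
    exact Finset.prod_eq_one fun i _ => abs_factor (ha i) hz
  have hterm : ∀ i : Fin n, z * ((∏ j ∈ Finset.univ.erase i, f j z) • f' i) =
      (((1 - Complex.normSq (a i)) / Complex.normSq (z - a i) : ℝ) : ℂ) * ∏ j, f j z := by
    intro i
    rw [smul_eq_mul]
    calc z * ((∏ j ∈ Finset.univ.erase i, f j z) * f' i)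
        = (z * f' i) * ∏ j ∈ Finset.univ.erase i, f j z := by ring
      _ = ((((1 - Complex.normSq (a i)) / Complex.normSq (z - a i) : ℝ) : ℂ) * f i z) *
            ∏ j ∈ Finset.univ.erase i, f j z := by rw [key_factor (ha i) hz]
      _ = (((1 - Complex.normSq (a i)) / Complex.normSq (z - a i) : ℝ) : ℂ) *
            (f i z * ∏ j ∈ Finset.univ.erase i, f j z) := by ring
      _ = _ := by
          congr 1
          exact Finset.mul_prod_erase Finset.univ (fun j => f j z) (Finset.mem_univ i)
  have hkey : z * (θ₀ * ∑ i, (∏ j ∈ Finset.univ.erase i, f j z) • f' i)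
      = (phiB a z : ℂ) * B z := by
    rw [hBeq z]
    calc z * (θ₀ * ∑ i, (∏ j ∈ Finset.univ.erase i, f j z) • f' i)
        = θ₀ * (z * ∑ i, (∏ j ∈ Finset.univ.erase i, f j z) • f' i) := by ring
      _ = θ₀ * ∑ i, z * ((∏ j ∈ Finset.univ.erase i, f j z) • f' i) := by rw [Finset.mul_sum]
      _ = θ₀ * ∑ i, (((1 - Complex.normSq (a i)) / Complex.normSq (z - a i) : ℝ) : ℂ) *
            ∏ j, f j z := by rw [Finset.sum_congr rfl fun i _ => hterm i]
      _ = _ := by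
          rw [← Finset.sum_mul, phiB]
          push_cast
          ring
  refine ⟨_, hBd, hkey, ?_, habsB⟩
  have h2 := congrArg norm hkey
  simp only [norm_mul, hz, habsB, Complex.norm_real, one_mul, mul_one] at h2
  rw [norm_mul, h2]
  exact abs_of_nonneg (phiB_nonneg ha)

end blaschke

section derivinf

lemma derivInf_nonneg (B : ℂ → ℂ) : 0 ≤ derivInf B :=
  Real.iInf_nonneg fun _ => norm_nonneg _

lemma derivInf_le (B : ℂ → ℂ) {z : ℂ} (hz : ‖z‖ = 1) :
    derivInf B ≤ ‖deriv B z‖ := by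
  haveI : Nonempty unitCircle := ⟨⟨z, hz⟩⟩
  have hbd : BddBelow (Set.range fun w : unitCircle => ‖deriv B (w : ℂ)‖) := by
    refine ⟨0, ?_⟩; rintro x ⟨w, rfl⟩; exact norm_nonneg _
  exact ciInf_le hbd (⟨z, hz⟩ : unitCircle)

lemma normSq_le_four {z α : ℂ} (hz : ‖z‖ = 1) (hα : ‖α‖ < 1) :
    Complex.normSq (z - α) ≤ 4 := by
  have h1 : ‖z - α‖ ≤ 2 := by
    calc ‖z - α‖ ≤ ‖z‖ + ‖α‖ := by
          simpa using norm_sub_le z α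
      _ ≤ 2 := by rw [hz]; linarith
  rw [← Complex.sq_norm]
  nlinarith [norm_nonneg (z - α)]

lemma derivInf_pos {n : ℕ} {B : ℂ → ℂ} (hB : IsBlaschke n B) : 0 < derivInf B := by
  obtain ⟨hn, θ₀, a, hθ, ha, hBeq⟩ := hB
  set i0 : Fin n := ⟨0, hn⟩
  have hc : 0 < (1 - Complex.normSq (a i0)) / 4 := by
    have := ha i0
    have h2 : Complex.normSq (a i0) < 1 := by
      rw [← Complex.sq_norm]; nlinarith [norm_nonneg (a i0)]
    linarith [div_pos (by linarith : (0:ℝ) < 1 - Complex.normSq (a i0)) (by norm_num : (0:ℝ) < 4)]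
  haveI : Nonempty unitCircle := ⟨⟨1, by simp [unitCircle]⟩⟩
  refine lt_of_lt_of_le hc (le_ciInf fun w => ?_)
  obtain ⟨D, hD, hkey, habsD, _⟩ := blaschke_main hn hθ ha hBeq w.2
  rw [hD.deriv, habsD]
  have hterm : (1 - Complex.normSq (a i0)) / 4 ≤
      (1 - Complex.normSq (a i0)) / Complex.normSq ((w : ℂ) - a i0) := by
    apply div_le_div_of_nonneg_left _ _ (normSq_le_four w.2 (ha i0))
    · have := ha i0
      have h2 : Complex.normSq (a i0) < 1 := by
        rw [← Complex.sq_norm]; nlinarith [norm_nonneg (a i0)]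
      linarith
    · rw [Complex.normSq_pos]; exact sub_ne_zero' (ha i0) w.2
  refine le_trans hterm ?_
  unfold phiB
  refine Finset.single_le_sum
    (f := fun i => (1 - Complex.normSq (a i)) / Complex.normSq ((w : ℂ) - a i))
    (fun i _ => ?_) (Finset.mem_univ i0)
  refine div_nonneg ?_ (Complex.normSq_nonneg _)
  have := ha i
  rw [← Complex.sq_norm]; nlinarith [norm_nonneg (a i)]

end derivinf

section step
variable {n : ℕ} {B : ℂ → ℂ}

/-- One-step expansion: the image of an arc under a Blaschke product contains an arc
expanded by at least `derivInf B`. -/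
lemma blaschke_step (hB : IsBlaschke n B) {u v : ℝ} (huv : u ≤ v) :
    ∃ u' v' : ℝ, derivInf B * (v - u) ≤ v' - u' ∧
      Ecirc '' Set.Ico u' v' ⊆ B '' (Ecirc '' Set.Ico u v) := by
  obtain ⟨hn, θ₀, a, hθ, ha, hBeq⟩ := hB
  set ψ : ℝ → ℝ := fun t => phiB a (Ecirc t) with hψ
  have hψcont : Continuous ψ := by
    refine continuous_finset_sum _ fun i _ => Continuous.div continuous_const
      (Complex.continuous_normSq.comp ((continuous_Ecirc).sub continuous_const)) fun t => ?_
    exact fun h => (sub_ne_zero' (ha i) (abs_Ecirc t)) (Complex.normSq_eq_zero.mp h)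
  have hψint : ∀ u v : ℝ, IntervalIntegrable ψ volume u v := fun u v =>
    hψcont.intervalIntegrable u v
  set γ₀ : ℝ := Complex.arg (B 1) / (2 * Real.pi) with hγ₀
  set g : ℝ → ℝ := fun t => γ₀ + ∫ s in (0:ℝ)..t, ψ s with hg
  have hg' : ∀ t, HasDerivAt g (ψ t) t := by
    intro t
    exact (intervalIntegral.integral_hasDerivAt_right (hψint 0 t)
      (hψcont.stronglyMeasurableAtFilter volume (nhds t)) hψcont.continuousAt).const_add γ₀
  have hψpos : ∀ t, 0 < ψ t := fun t => phiB_pos hn ha (abs_Ecirc t)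
  have hgmono : StrictMono g := strictMono_of_deriv_pos fun t => by
    rw [(hg' t).deriv]; exact hψpos t
  have hgcont : Continuous g := by
    have : Differentiable ℝ g := fun t => (hg' t).differentiableAt
    exact this.continuous
  -- the lift identity
  have hBall : ∀ t, ∃ D, HasDerivAt B D (Ecirc t) ∧
      Ecirc t * D = (ψ t : ℂ) * B (Ecirc t) ∧ ‖D‖ = ψ t ∧
        ‖B (Ecirc t)‖ = 1 := fun t => blaschke_main hn hθ ha hBeq (abs_Ecirc t)
  set h : ℝ → ℂ := fun t => B (Ecirc t) * Ecirc (-(g t)) with hh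
  have hhderiv : ∀ t, HasDerivAt h 0 t := by
    intro t
    obtain ⟨D, hD, hkey, -, -⟩ := hBall t
    have h1 : HasDerivAt (fun t => B (Ecirc t)) (D * (2 * (Real.pi : ℂ) * Complex.I * Ecirc t)) t :=
      HasDerivAt.comp t hD (hasDerivAt_Ecirc t)
    have h2 : HasDerivAt (fun t => Ecirc (-(g t)))
        ((-(ψ t)) • (2 * (Real.pi : ℂ) * Complex.I * Ecirc (-(g t)))) t :=
      (hasDerivAt_Ecirc (-(g t))).scomp_of_eq t ((hg' t).fun_neg) rfl
    have h3 := h1.mul h2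
    refine h3.congr_deriv ?_
    have hsmul : (-ψ t) • (2 * (Real.pi:ℂ) * Complex.I * Ecirc (-(g t)))
        = ((-ψ t : ℝ) : ℂ) * (2 * (Real.pi:ℂ) * Complex.I * Ecirc (-(g t))) :=
      Complex.real_smul
    rw [hsmul]
    push_cast
    linear_combination (2 * (Real.pi:ℂ) * Complex.I * Ecirc (-(g t))) * hkey
  have hconst : ∀ t, h t = h 0 :=
    fun t => is_const_of_deriv_eq_zero (fun t => (hhderiv t).differentiableAt)
      (fun t => (hhderiv t).deriv) t 0
  have habsB1 : ‖B 1‖ = 1 := by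
    have := (hBall 0).choose_spec.2.2.2
    rwa [Ecirc_zero] at this
  have hEγ₀ : Ecirc γ₀ = B 1 := by
    rw [Ecirc_eq]
    have hπ : (2 * Real.pi) ≠ 0 := by positivity
    rw [show 2 * Real.pi * γ₀ = Complex.arg (B 1) by rw [hγ₀]; field_simp]
    simpa [habsB1] using Complex.norm_mul_exp_arg_mul_I (B 1)
  have hh0 : h 0 = 1 := by
    have hg0 : g 0 = γ₀ := by simp [hg]
    rw [hh]
    simp only [Ecirc_zero, hg0]
    rw [← hEγ₀, ← Ecirc_add]
    simp [Ecirc_zero]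
  have hlift : ∀ t, B (Ecirc t) = Ecirc (g t) := by
    intro t
    have h1 : B (Ecirc t) * Ecirc (-(g t)) = 1 := by rw [← hh0]; exact hconst t
    have h2 : Ecirc (g t) * Ecirc (-(g t)) = 1 := by
      rw [← Ecirc_add]; simp [Ecirc_zero]
    have h3 : Ecirc (-(g t)) ≠ 0 := Ecirc_ne_zero _
    have := mul_right_cancel₀ h3 (h1.trans h2.symm)
    exact this
  -- expansion estimate
  have hgv : derivInf B * (v - u) ≤ g v - g u := by
    have hsub : g v - g u = ∫ s in u..v, ψ s := by
      rw [hg]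
      simp only [add_sub_add_left_eq_sub]
      exact (intervalIntegral.integral_interval_sub_left (hψint 0 v) (hψint 0 u))
    have hψlb : ∀ s ∈ Set.Icc u v, derivInf B ≤ ψ s := by
      intro s _
      obtain ⟨D, hD, -, habsD, -⟩ := hBall s
      rw [← habsD, ← hD.deriv]
      exact derivInf_le B (abs_Ecirc s)
    have h1 : ∫ s in u..v, (derivInf B) ≤ ∫ s in u..v, ψ s :=
      intervalIntegral.integral_mono_on huv (intervalIntegrable_const) (hψint u v) hψlb
    rw [intervalIntegral.integral_const, smul_eq_mul] at h1
    rw [hsub]; linarith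
  refine ⟨g u, g v, hgv, ?_⟩
  rintro w ⟨y, hy, rfl⟩
  have hIcC : ContinuousOn g (Set.Icc u v) := hgcont.continuousOn
  obtain ⟨t, ht, hgt⟩ : ∃ t ∈ Set.Icc u v, g t = y :=
    intermediate_value_Icc huv hIcC ⟨hy.1, le_of_lt hy.2⟩
  have htv : t ≠ v := by
    intro hEq
    rw [hEq] at hgt
    rw [hgt] at hy
    exact absurd hy.2 (lt_irrefl _)
  refine ⟨Ecirc t, ⟨t, ⟨ht.1, lt_of_le_of_ne ht.2 htv⟩, rfl⟩, ?_⟩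
  rw [hlift t, hgt]

end step


section iterate
variable {Ω : Type*} (σinv : Ω → Ω) (T : Ω → ℂ → ℂ) (deg : Ω → ℕ)

lemma backIter_image (hB : ∀ ω, IsBlaschke (deg ω) (T ω)) (ω : Ω) :
    ∀ (m : ℕ) (u v : ℝ), u ≤ v → ∃ u' v' : ℝ,
      (∏ i ∈ Finset.range m, derivInf (T (σinv^[i + 1] ω))) * (v - u) ≤ v' - u' ∧
      Ecirc '' Set.Ico u' v' ⊆ backIter σinv T m ω '' (Ecirc '' Set.Ico u v) := by
  intro m
  induction m with
  | zero =>
    intro u v huv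
    refine ⟨u, v, by simp, ?_⟩
    have : backIter σinv T 0 ω '' (Ecirc '' Set.Ico u v) = Ecirc '' Set.Ico u v :=
      Set.image_id'  _
    rw [this]
  | succ m ih =>
    intro u v huv
    obtain ⟨u₁, v₁, h₁, hsub₁⟩ := blaschke_step (hB (σinv^[m + 1] ω)) huv
    have hc0 : 0 ≤ derivInf (T (σinv^[m + 1] ω)) := derivInf_nonneg _
    have huv₁ : u₁ ≤ v₁ := by nlinarith
    obtain ⟨u₂, v₂, h₂, hsub₂⟩ := ih u₁ v₁ huv₁
    have hP0 : 0 ≤ ∏ i ∈ Finset.range m, derivInf (T (σinv^[i + 1] ω)) :=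
      Finset.prod_nonneg fun i _ => derivInf_nonneg _
    refine ⟨u₂, v₂, ?_, ?_⟩
    · rw [Finset.prod_range_succ]
      calc (∏ i ∈ Finset.range m, derivInf (T (σinv^[i + 1] ω))) *
            derivInf (T (σinv^[m + 1] ω)) * (v - u)
          ≤ (∏ i ∈ Finset.range m, derivInf (T (σinv^[i + 1] ω))) * (v₁ - u₁) := by
            rw [mul_assoc]; exact mul_le_mul_of_nonneg_left h₁ hP0
        _ ≤ v₂ - u₂ := h₂
    · refine hsub₂.trans ?_
      have heq : backIter σinv T m ω '' (T (σinv^[m + 1] ω) '' (Ecirc '' Set.Ico u v))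
          = backIter σinv T (m + 1) ω '' (Ecirc '' Set.Ico u v) :=
        Set.image_image _ _ _
      rw [← heq]
      exact Set.image_mono hsub₁

end iterate

section measure


lemma mCircle_eq : mCircle = Measure.map Ecirc (volume.restrict (Set.Ico (0 : ℝ) 1)) := rfl

lemma measurable_Ecirc : Measurable Ecirc := continuous_Ecirc.measurable

lemma mCircle_univ : mCircle Set.univ = 1 := by
  rw [mCircle_eq, Measure.map_apply measurable_Ecirc MeasurableSet.univ, Set.preimage_univ,
    Measure.restrict_apply_univ, Real.volume_Ico]
  norm_num

lemma Ecirc_image_Ico (u : ℝ) : Ecirc '' Set.Ico u (u + 1) = unitCircle := by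
  apply Set.eq_of_subset_of_subset
  · rintro w ⟨t, -, rfl⟩; exact abs_Ecirc t
  · intro z hz
    obtain ⟨t, ht, hE⟩ := Ecirc_surj hz u
    exact ⟨t, ht, hE⟩

lemma mCircle_eq_one_of_subset {S : Set ℂ} (h : unitCircle ⊆ S) : mCircle S = 1 := by
  have hc : mCircle Sᶜ = 0 := by
    refine le_antisymm ?_ zero_le
    refine le_trans (measure_mono (Set.compl_subset_compl.mpr h)) ?_
    rw [mCircle_eq, Measure.map_apply measurable_Ecirc measurableSet_unitCircle.compl]
    have : Ecirc ⁻¹' unitCircleᶜ = ∅ := by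
      ext t; simp [unitCircle, abs_Ecirc t]
    rw [this]
    simp
  refine le_antisymm (le_trans (measure_mono (Set.subset_univ S)) (le_of_eq mCircle_univ)) ?_
  calc (1 : ENNReal) = mCircle Set.univ := mCircle_univ.symm
    _ = mCircle (S ∪ Sᶜ) := by rw [Set.union_compl_self]
    _ ≤ mCircle S + mCircle Sᶜ := measure_union_le _ _
    _ = mCircle S := by rw [hc, add_zero]

end measure


section ergodic
variable {Ω : Type*} [MeasurableSpace Ω] {ℙ : Measure Ω} [IsProbabilityMeasure ℙ]
  {τ : Ω → Ω} {g : Ω → ℝ}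

/-- Birkhoff sums along the orbit. -/
def bsum (τ : Ω → Ω) (g : Ω → ℝ) (m : ℕ) (ω : Ω) : ℝ := ∑ i ∈ Finset.range m, g (τ^[i] ω)

/-- Running maxima of Birkhoff sums, starting from `0 = bsum 0`. -/
def bmax (τ : Ω → Ω) (g : Ω → ℝ) : ℕ → Ω → ℝ
  | 0, _ => 0
  | N + 1, ω => max (bmax τ g N ω) (bsum τ g (N + 1) ω)

lemma bsum_succ (ω : Ω) (k : ℕ) : bsum τ g (k + 1) ω = g ω + bsum τ g k (τ ω) := by
  unfold bsum
  rw [Finset.sum_range_succ']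
  simp only [Function.iterate_succ_apply, Function.iterate_zero_apply]
  ring

lemma bsum_measurable (hτ : Measurable τ) (hg : Measurable g) (m : ℕ) :
    Measurable (bsum τ g m) := by
  unfold bsum
  exact Finset.measurable_sum _ fun i _ => hg.comp (hτ.iterate i)

lemma bsum_integrable (hτ : MeasurePreserving τ ℙ ℙ) (hg : Integrable g ℙ) (m : ℕ) :
    Integrable (bsum τ g m) ℙ := by
  unfold bsum
  exact integrable_finset_sum _ fun i _ =>
    (hτ.iterate i).integrable_comp hg.aestronglyMeasurable |>.mpr hg

lemma bmax_nonneg (N : ℕ) (ω : Ω) : 0 ≤ bmax τ g N ω := by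
  induction N with
  | zero => exact le_refl _
  | succ N ih => exact le_trans ih (le_max_left _ _)

lemma bmax_mono (N : ℕ) (ω : Ω) : bmax τ g N ω ≤ bmax τ g (N + 1) ω := le_max_left _ _

lemma le_bmax (N k : ℕ) (hk : k ≤ N) (ω : Ω) : bsum τ g k ω ≤ bmax τ g N ω := by
  induction N with
  | zero =>
    have : k = 0 := Nat.le_zero.mp hk
    subst this
    simp [bsum, bmax]
  | succ N ih =>
    rcases Nat.lt_or_ge k (N + 1) with h | h
    · exact le_trans (ih (Nat.lt_succ_iff.mp h)) (le_max_left _ _)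
    · have : k = N + 1 := le_antisymm hk h
      subst this
      exact le_max_right _ _

lemma bmax_attained {N : ℕ} {ω : Ω} (h : 0 < bmax τ g N ω) :
    ∃ k, 1 ≤ k ∧ k ≤ N ∧ bmax τ g N ω ≤ bsum τ g k ω := by
  induction N with
  | zero => simp [bmax] at h
  | succ N ih =>
    rcases le_or_gt (bmax τ g N ω) (bsum τ g (N + 1) ω) with h1 | h1
    · exact ⟨N + 1, Nat.succ_le_succ (Nat.zero_le N), le_refl _, max_le h1 (le_refl _)⟩
    · have hb : bmax τ g (N + 1) ω = bmax τ g N ω := max_eq_left h1.le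
      rw [hb] at h ⊢
      obtain ⟨k, hk1, hkN, hkb⟩ := ih h
      exact ⟨k, hk1, Nat.le_succ_of_le hkN, hkb⟩

lemma bmax_measurable (hτ : Measurable τ) (hg : Measurable g) (N : ℕ) :
    Measurable (bmax τ g N) := by
  induction N with
  | zero => exact measurable_const
  | succ N ih => exact Measurable.max ih (bsum_measurable hτ hg (N + 1))

lemma bmax_integrable (hτ : MeasurePreserving τ ℙ ℙ) (hg : Integrable g ℙ) (N : ℕ) :
    Integrable (bmax τ g N) ℙ := by
  induction N with
  | zero => exact integrable_const 0
  | succ N ih =>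
    have := bsum_integrable hτ hg (N + 1)
    exact ih.sup this

/-- **Hopf's maximal ergodic theorem** (Garsia's proof). -/
lemma maximal_ergodic (hτ : MeasurePreserving τ ℙ ℙ) (hgm : Measurable g)
    (hg : Integrable g ℙ) (N : ℕ) :
    0 ≤ ∫ ω in {ω | 0 < bmax τ g N ω}, g ω ∂ℙ := by
  set M := bmax τ g N with hM
  set P : Set Ω := {ω | 0 < M ω} with hP
  have hPm : MeasurableSet P := measurableSet_lt measurable_const (bmax_measurable hτ.measurable hgm N)
  have hMi : Integrable M ℙ := bmax_integrable hτ hg N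
  have hMτi : Integrable (fun ω => M (τ ω)) ℙ :=
    (hτ.integrable_comp hMi.aestronglyMeasurable).mpr hMi
  -- pointwise estimate on P
  have hpoint : ∀ ω ∈ P, M ω - M (τ ω) ≤ g ω := by
    intro ω hω
    obtain ⟨k, hk1, hkN, hkb⟩ := bmax_attained hω
    obtain ⟨k', rfl⟩ : ∃ k', k = k' + 1 := ⟨k - 1, (Nat.succ_pred_eq_of_pos hk1).symm⟩
    have h1 : bsum τ g (k' + 1) ω = g ω + bsum τ g k' (τ ω) := bsum_succ ω k'
    have h2 : bsum τ g k' (τ ω) ≤ M (τ ω) := le_bmax N k' (le_trans (Nat.le_succ k') hkN) (τ ω)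
    have := hkb
    rw [h1] at this
    linarith
  have hPint : ∫ ω in P, (M ω - M (τ ω)) ∂ℙ ≤ ∫ ω in P, g ω ∂ℙ := by
    refine setIntegral_mono_on ((hMi.sub hMτi).integrableOn) (hg.integrableOn) hPm hpoint
  refine le_trans ?_ hPint
  rw [integral_sub (hMi.integrableOn) (hMτi.integrableOn)]
  have hMP : ∫ ω in P, M ω ∂ℙ = ∫ ω, M ω ∂ℙ := by
    rw [← integral_add_compl hPm hMi]
    have : ∫ ω in Pᶜ, M ω ∂ℙ = 0 := by
      refine setIntegral_eq_zero_of_forall_eq_zero fun ω hω => ?_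
      have h1 : ¬ 0 < M ω := hω
      exact le_antisymm (not_lt.mp h1) (bmax_nonneg N ω)
    rw [this, add_zero]
  have hMτP : ∫ ω in P, M (τ ω) ∂ℙ ≤ ∫ ω, M (τ ω) ∂ℙ :=
    setIntegral_le_integral hMτi (Eventually.of_forall fun ω => bmax_nonneg N (τ ω))
  have hMeq : ∫ ω, M (τ ω) ∂ℙ = ∫ ω, M ω ∂ℙ := by
    have := integral_map (μ := ℙ) hτ.measurable.aemeasurable
      (f := M) (by rw [hτ.map_eq]; exact hMi.aestronglyMeasurable)
    rw [hτ.map_eq] at this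
    exact this.symm
  rw [hMP]
  rw [hMeq] at hMτP
  linarith

lemma bddBelow_iff_bound (f : ℕ → ℝ) : BddBelow (Set.range f) ↔ ∃ c, ∀ m, c ≤ f m :=
  ⟨fun ⟨c, hc⟩ => ⟨c, fun m => hc ⟨m, rfl⟩⟩,
   fun ⟨c, hc⟩ => ⟨c, by rintro x ⟨m, rfl⟩; exact hc m⟩⟩

/-- If the integral is positive and the system is ergodic, the Birkhoff sums are a.e.
bounded below. -/
lemma ae_bddBelow_bsum (hτ : MeasurePreserving τ ℙ ℙ)
    (htriv : ∀ s : Set Ω, MeasurableSet s → τ ⁻¹' s = s → ℙ s = 0 ∨ ℙ s = 1)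
    (hgm : Measurable g) (hg : Integrable g ℙ) (hpos : 0 < ∫ ω, g ω ∂ℙ) :
    ∀ᵐ ω ∂ℙ, BddBelow (Set.range fun m => bsum τ g m ω) := by
  set B : Set Ω := {ω | ¬ BddBelow (Set.range fun m => bsum τ g m ω)} with hB
  -- B is measurable
  have hBeq : B = ⋂ k : ℕ, ⋃ m : ℕ, {ω | bsum τ g m ω < -(k : ℝ)} := by
    ext ω
    simp only [hB, Set.mem_setOf_eq, Set.mem_iInter, Set.mem_iUnion, bddBelow_iff_bound]
    constructor
    · intro h k
      by_contra hc
      push_neg at hc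
      exact h ⟨-(k : ℝ), fun m => (hc m)⟩
    · rintro h ⟨c, hc⟩
      obtain ⟨m, hm⟩ := h ⌈-c⌉₊
      have : -(⌈-c⌉₊ : ℝ) ≤ c := by
        have := Nat.le_ceil (-c)
        linarith
      exact absurd (hc m) (not_le.mpr (lt_of_lt_of_le hm this))
  have hBm : MeasurableSet B := by
    rw [hBeq]
    exact MeasurableSet.iInter fun k => MeasurableSet.iUnion fun m =>
      measurableSet_lt (bsum_measurable hτ.measurable hgm m) measurable_const
  -- B is invariant
  have key : ∀ ω, (∃ c, ∀ m, c ≤ bsum τ g m (τ ω)) ↔ (∃ c, ∀ m, c ≤ bsum τ g m ω) := by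
    intro ω
    constructor
    · rintro ⟨c, hc⟩
      refine ⟨min (g ω + c) 0, fun m => ?_⟩
      cases m with
      | zero => simp [bsum]
      | succ k =>
        rw [bsum_succ]
        exact le_trans (min_le_left _ _) (by linarith [hc k])
    · rintro ⟨c, hc⟩
      refine ⟨c - g ω, fun m => ?_⟩
      have h2 := hc (m + 1)
      rw [bsum_succ] at h2
      linarith
  have hBinv : τ ⁻¹' B = B := by
    ext ω
    simp only [Set.mem_preimage, hB, Set.mem_setOf_eq, bddBelow_iff_bound]
    exact not_congr (key ω)
  rcases htriv B hBm hBinv with h0 | h1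
  · rw [ae_iff]
    exact h0
  · exfalso
    set P : ℕ → Set Ω := fun N => {ω | 0 < bmax τ (fun ω => -g ω) N ω} with hPdef
    have hPm : ∀ N, MeasurableSet (P N) := fun N =>
      measurableSet_lt measurable_const (bmax_measurable hτ.measurable hgm.neg N)
    have hPmono : Monotone P := by
      refine monotone_nat_of_le_succ fun N ω hω => ?_
      exact lt_of_lt_of_le hω (bmax_mono N ω)
    have hbsum_neg : ∀ m ω, bsum τ (fun ω => -g ω) m ω = -bsum τ g m ω := by
      intro m ω
      unfold bsum
      rw [← Finset.sum_neg_distrib]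
    have hBsub : B ⊆ ⋃ N, P N := by
      intro ω hω
      rw [hBeq] at hω
      have h2 := Set.mem_iInter.mp hω 0
      obtain ⟨m, hm⟩ := Set.mem_iUnion.mp h2
      simp only [Set.mem_setOf_eq, Nat.cast_zero, neg_zero] at hm
      refine Set.mem_iUnion.mpr ⟨m, ?_⟩
      have h3 : 0 < bsum τ (fun ω => -g ω) m ω := by rw [hbsum_neg]; linarith
      exact lt_of_lt_of_le h3 (le_bmax m m (le_refl m) ω)
    have hle : ∀ N, ∫ ω in P N, g ω ∂ℙ ≤ 0 := by
      intro N
      have hmet : 0 ≤ ∫ ω in P N, -g ω ∂ℙ := maximal_ergodic (g := fun ω => -g ω) hτ hgm.neg hg.neg N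
      rw [integral_neg] at hmet
      linarith
    set U := ⋃ N, P N with hU
    have hUm : MeasurableSet U := MeasurableSet.iUnion hPm
    have hT : Tendsto (fun N => ∫ ω in P N, g ω ∂ℙ) atTop (nhds (∫ ω in U, g ω ∂ℙ)) :=
      tendsto_setIntegral_of_monotone hPm hPmono hg.integrableOn
    have hUle : ∫ ω in U, g ω ∂ℙ ≤ 0 := le_of_tendsto hT (Eventually.of_forall hle)
    have hU1 : ℙ U = 1 := le_antisymm prob_le_one (h1 ▸ measure_mono hBsub)
    have hUc0 : ℙ Uᶜ = 0 := by
      rw [measure_compl hUm (measure_ne_top ℙ U), hU1, measure_univ, tsub_self]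
    have hint : ∫ ω in U, g ω ∂ℙ = ∫ ω, g ω ∂ℙ := by
      rw [← integral_add_compl hUm hg]
      have hz : ∫ ω in Uᶜ, g ω ∂ℙ = 0 := by
        rw [Measure.restrict_eq_zero.mpr hUc0]
        exact integral_zero_measure g
      rw [hz, add_zero]
    rw [hint] at hUle
    linarith

/-- Birkhoff sums of a function with positive integral tend to infinity a.e. -/
lemma ae_tendsto_bsum_atTop (hτ : MeasurePreserving τ ℙ ℙ)
    (htriv : ∀ s : Set Ω, MeasurableSet s → τ ⁻¹' s = s → ℙ s = 0 ∨ ℙ s = 1)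
    (hgm : Measurable g) (hg : Integrable g ℙ) (hpos : 0 < ∫ ω, g ω ∂ℙ) :
    ∀ᵐ ω ∂ℙ, Tendsto (fun m => bsum τ g m ω) atTop atTop := by
  set ε : ℝ := (∫ ω, g ω ∂ℙ) / 2 with hε
  have hεpos : 0 < ε := by positivity
  set g' : Ω → ℝ := fun ω => g ω - ε with hg'
  have hg'm : Measurable g' := hgm.sub measurable_const
  have hg'i : Integrable g' ℙ := hg.sub (integrable_const ε)
  have hg'pos : 0 < ∫ ω, g' ω ∂ℙ := by
    rw [hg']
    rw [integral_sub hg (integrable_const ε), integral_const, probReal_univ]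
    simp only [ENNReal.toReal_one, one_smul]
    rw [hε]
    linarith
  filter_upwards [ae_bddBelow_bsum hτ htriv hg'm hg'i hg'pos] with ω hω
  rw [bddBelow_iff_bound] at hω
  obtain ⟨c, hc⟩ := hω
  have hkey : ∀ m, c + m * ε ≤ bsum τ g m ω := by
    intro m
    have h2 := hc m
    have h3 : bsum τ g' m ω = bsum τ g m ω - m * ε := by
      unfold bsum
      rw [hg']
      rw [Finset.sum_sub_distrib, Finset.sum_const, Finset.card_range]
      simp [nsmul_eq_mul]
    rw [h3] at h2
    linarith
  refine tendsto_atTop_mono hkey ?_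
  refine tendsto_atTop_add_const_left _ c ?_
  exact Tendsto.atTop_mul_const hεpos tendsto_natCast_atTop_atTop

end ergodic

/-- covering lemma for expanding-on-average Blaschke product cocycles. -/
theorem covering_lemma {Ω : Type*} [MeasurableSpace Ω] (ℙ : Measure Ω) [IsProbabilityMeasure ℙ]
    (σ σinv : Ω → Ω) (herg : Ergodic σ ℙ)
    (hinv1 : Function.LeftInverse σinv σ) (hinv2 : Function.RightInverse σinv σ)
    (hσinv : Measurable σinv)
    (T : Ω → ℂ → ℂ) (deg : Ω → ℕ) (hB : ∀ ω, IsBlaschke (deg ω) (T ω))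
    (hTmeas : Measurable (Function.uncurry T))
    (hInfMeas : Measurable fun ω => derivInf (T ω))
    (hLogInt : Integrable (fun ω => Real.log (derivInf (T ω))) ℙ)
    (hLogPos : 0 < ∫ ω, Real.log (derivInf (T ω)) ∂ℙ)
    (A : Set ℂ) (a b : ℝ) (h0a : 0 ≤ a) (hab : a < b) (hb1 : b ≤ 1)
    (hA : A = (fun t : ℝ => Complex.exp (2 * (Real.pi : ℂ) * Complex.I * (t : ℂ))) '' Set.Ico a b)
    (hA0 : 0 < mCircle A) (hA1 : mCircle A < 1) :
    ∀ᵐ ω ∂ℙ, ∃ nc : ℕ, ∀ n ≥ nc, mCircle (backIter σinv T n ω '' A) = 1 := by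
  classical
  have hσ : MeasurePreserving σ ℙ ℙ := herg.toMeasurePreserving
  have hτmp : MeasurePreserving σinv ℙ ℙ := by
    refine ⟨hσinv, ?_⟩
    refine Measure.ext fun s hs => ?_
    rw [Measure.map_apply hσinv hs]
    have h2 : σ ⁻¹' (σinv ⁻¹' s) = s := by
      ext ω
      simp [Set.mem_preimage, hinv1 ω]
    calc ℙ (σinv ⁻¹' s) = ℙ (σ ⁻¹' (σinv ⁻¹' s)) :=
          (hσ.measure_preimage ((hσinv hs).nullMeasurableSet)).symm
      _ = ℙ s := by rw [h2]
  have htriv : ∀ s : Set Ω, MeasurableSet s → σinv ⁻¹' s = s → ℙ s = 0 ∨ ℙ s = 1 := by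
    intro s hs hinv
    have h2 : σ ⁻¹' s = s := by
      conv_lhs => rw [← hinv]
      ext ω
      simp [Set.mem_preimage, hinv1 ω]
    rcases herg.measure_self_or_compl_eq_zero hs h2 with h | h
    · exact Or.inl h
    · exact Or.inr ((prob_compl_eq_zero_iff hs).mp h)
  set F : Ω → ℝ := fun ω => Real.log (derivInf (T ω)) with hF
  have hFm : Measurable F := Real.measurable_log.comp hInfMeas
  have main := ae_tendsto_bsum_atTop hτmp htriv hFm hLogInt hLogPos
  have main2 : ∀ᵐ ω ∂ℙ, Tendsto (fun m => bsum σinv F m (σinv ω)) atTop atTop := by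
    refine ae_of_ae_map (p := fun ω' => Tendsto (fun m => bsum σinv F m ω') atTop atTop)
      hσinv.aemeasurable ?_
    rw [hτmp.map_eq]
    exact main
  filter_upwards [main2] with ω hω
  have hba : (0:ℝ) < b - a := by linarith
  have hL : ∀ᶠ m in atTop, Real.log ((b - a)⁻¹) ≤ bsum σinv F m (σinv ω) :=
    hω.eventually_ge_atTop _
  obtain ⟨nc, hnc⟩ := eventually_atTop.mp hL
  refine ⟨nc, fun n hn => ?_⟩
  have hprod : (b - a)⁻¹ ≤ ∏ i ∈ Finset.range n, derivInf (T (σinv^[i + 1] ω)) := by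
    have hsum := hnc n hn
    have hexp : Real.exp (bsum σinv F n (σinv ω))
        = ∏ i ∈ Finset.range n, derivInf (T (σinv^[i + 1] ω)) := by
      unfold bsum
      rw [Real.exp_sum]
      refine Finset.prod_congr rfl fun i _ => ?_
      rw [show σinv^[i] (σinv ω) = σinv^[i + 1] ω from
        (Function.iterate_succ_apply σinv i ω).symm]
      exact Real.exp_log (derivInf_pos (hB _))
    calc (b - a)⁻¹ = Real.exp (Real.log ((b - a)⁻¹)) :=
          (Real.exp_log (by positivity)).symm
      _ ≤ Real.exp (bsum σinv F n (σinv ω)) := Real.exp_le_exp.mpr hsum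
      _ = _ := hexp
  obtain ⟨u', v', hbnd, hsub⟩ := backIter_image σinv T deg hB ω n a b (le_of_lt hab)
  have h1 : (1:ℝ) ≤ v' - u' := by
    have h2 : (b - a)⁻¹ * (b - a) ≤
        (∏ i ∈ Finset.range n, derivInf (T (σinv^[i + 1] ω))) * (b - a) :=
      mul_le_mul_of_nonneg_right hprod (le_of_lt hba)
    rw [inv_mul_cancel₀ (ne_of_gt hba)] at h2
    linarith
  have hA' : A = Ecirc '' Set.Ico a b := hA
  rw [hA']
  apply mCircle_eq_one_of_subset
  calc unitCircle = Ecirc '' Set.Ico u' (u' + 1) := (Ecirc_image_Ico u').symm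
    _ ⊆ Ecirc '' Set.Ico u' v' := Set.image_mono (Set.Ico_subset_Ico_right (by linarith))
    _ ⊆ backIter σinv T n ω '' (Ecirc '' Set.Ico a b) := hsub
end
end

section
/- Let A ⊆ 𝕋 be an arc, let T_1, …, T_n be finite Blaschke products, and set F = T_n ∘ ⋯ ∘ T_1 (restricted to 𝕋). If m(F(A)) < 1, then m(F(A)) ≥ m(A)·∏_{k=1}^n inf_{z∈𝕋}|T_k'(z)|. -/
open MeasureTheory Filter Set

noncomputable section

/-- The parametrization t ↦ e^{2πit}. -/
def Em (t : ℝ) : ℂ := Complex.exp (2 * (Real.pi : ℂ) * Complex.I * (t : ℂ))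

lemma Em_cont : Continuous Em := by
  exact Complex.continuous_exp.comp (by continuity)

lemma Em_meas : Measurable Em := Em_cont.measurable

lemma Em_ne_zero (t : ℝ) : Em t ≠ 0 := Complex.exp_ne_zero _

lemma abs_Em (t : ℝ) : ‖Em t‖ = 1 := by
  rw [Em, Complex.norm_exp]
  norm_num [Complex.mul_re, Complex.mul_im]

lemma Em_mem (t : ℝ) : Em t ∈ unitCircle := abs_Em t

lemma Em_add_int (t : ℝ) (k : ℤ) : Em (t + k) = Em t := by
  rw [Em, Em, Complex.ofReal_add, mul_add, Complex.exp_add]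
  have : Complex.exp (2 * (Real.pi : ℂ) * Complex.I * (k : ℝ)) = 1 := by
    push_cast
    rw [show 2 * (Real.pi : ℂ) * Complex.I * (k:ℂ) = (k:ℂ) * (2 * Real.pi * Complex.I) by ring]
    exact Complex.exp_int_mul_two_pi_mul_I k
  rw [this, mul_one]

lemma Em_eq_iff {t s : ℝ} : Em t = Em s ↔ ∃ k : ℤ, t - s = k := by
  constructor
  · intro h
    have h2 : Complex.exp (2 * (Real.pi : ℂ) * Complex.I * ((t : ℂ) - s)) = 1 := by
      rw [mul_sub, Complex.exp_sub, Em, Em] at *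
      rw [h, div_self (Complex.exp_ne_zero _)]
    rw [Complex.exp_eq_one_iff] at h2
    obtain ⟨k, hk⟩ := h2
    refine ⟨k, ?_⟩
    have hπ : (Real.pi : ℂ) ≠ 0 := by
      simpa using Real.pi_ne_zero
    have h3 : ((t : ℂ) - s) = k := by
      have hI : (Complex.I : ℂ) ≠ 0 := Complex.I_ne_zero
      have h2 : (2 : ℂ) * Real.pi * Complex.I ≠ 0 := by
        simp [hπ, hI]
      rw [show (k:ℂ) * (2 * Real.pi * Complex.I) = 2 * Real.pi * Complex.I * k by ring] at hk
      exact mul_left_cancel₀ h2 hk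
    have := congrArg Complex.re h3
    simpa using this
  · rintro ⟨k, hk⟩
    have : t = (t - k) + k := by ring
    rw [this, Em_add_int]
    congr 1
    linarith

lemma Em_arg {w : ℂ} (hw : w ∈ unitCircle) : Em (Complex.arg w / (2 * Real.pi)) = w := by
  have hπ : (Real.pi : ℂ) ≠ 0 := by exact_mod_cast Real.pi_ne_zero
  have : (2 * (Real.pi : ℂ) * Complex.I * ((Complex.arg w / (2 * Real.pi) : ℝ) : ℂ))
      = Complex.arg w * Complex.I := by
    push_cast
    field_simp
  rw [Em, this]
  have := Complex.norm_mul_exp_arg_mul_I w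
  rw [show ‖w‖ = 1 from hw] at this
  simpa using this

lemma mCircle_def : mCircle = Measure.map Em (volume.restrict (Set.Ico (0:ℝ) 1)) := rfl

/-- lower bound for mCircle of any set. -/
lemma mCircle_ge (S : Set ℂ) :
    volume (Em ⁻¹' S ∩ Set.Ico (0:ℝ) 1) ≤ mCircle S := by
  have h := Measure.le_map_apply (μ := volume.restrict (Set.Ico (0:ℝ) 1))
    (Em_meas.aemeasurable) S
  rw [← mCircle_def] at h
  rwa [Measure.restrict_apply' measurableSet_Ico] at h

lemma mCircle_eq_s8 (S : Set ℂ) (hS : MeasurableSet S) :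
    mCircle S = volume (Em ⁻¹' S ∩ Set.Ico (0:ℝ) 1) := by
  rw [mCircle_def, Measure.map_apply Em_meas hS, Measure.restrict_apply' measurableSet_Ico]

lemma mCircle_arc_le {a b : ℝ} (h0a : 0 ≤ a) (hab : a ≤ b) (hb1 : b ≤ 1) :
    mCircle (Em '' Set.Ico a b) ≤ ENNReal.ofReal (b - a) := by
  have h1 : mCircle (Em '' Set.Ico a b) ≤ mCircle (Em '' Set.Icc a b) :=
    measure_mono (image_mono Ico_subset_Icc_self)
  have hK : IsCompact (Em '' Set.Icc a b) := (isCompact_Icc).image Em_cont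
  rw [mCircle_eq_s8 _ hK.measurableSet] at h1
  have hsub : Em ⁻¹' (Em '' Set.Icc a b) ∩ Set.Ico (0:ℝ) 1 ⊆ Set.Icc a b ∪ {0} := by
    rintro t ⟨⟨s, hs, hst⟩, ht⟩
    obtain ⟨k, hk⟩ := Em_eq_iff.mp (hst.symm)
    have hk1 : (k : ℝ) < 1 := by
      have := ht.2; have := hs.1; have := h0a; linarith [hk]
    have hk2 : (-1 : ℝ) ≤ (k : ℝ) := by
      have := ht.1; have := hs.2; have := hb1; linarith [hk]
    have hk1' : k ≤ 0 := by
      have : (k:ℝ) < 1 := hk1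
      exact_mod_cast Int.lt_add_one_iff.mp (by exact_mod_cast this)
    have hk2' : -1 ≤ k := by exact_mod_cast hk2
    interval_cases k
    · -- k = -1 : t = s - 1, s ≤ 1 so t ≤ 0, t ≥ 0 so t = 0
      right
      have : t = s - 1 := by push_cast at hk; linarith
      have := ht.1
      have := hs.2
      simp only [mem_singleton_iff]
      linarith
    · left
      have : t = s := by push_cast at hk; linarith
      rw [this]; exact hs
  calc mCircle (Em '' Set.Ico a b) ≤ volume (Set.Icc a b ∪ {0}) := h1.trans (measure_mono hsub)
    _ ≤ volume (Set.Icc a b) + volume ({0} : Set ℝ) := measure_union_le _ _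
    _ = ENNReal.ofReal (b - a) := by simp [Real.volume_Icc]

/-- A circle map with good derivative data. -/
def Nice (c : ℝ) (F : ℂ → ℂ) : Prop :=
  ∃ F' : ℂ → ℂ, ContinuousOn F' unitCircle ∧
    (∀ z ∈ unitCircle, HasDerivAt F (F' z) z) ∧
    (∀ z ∈ unitCircle, F z ∈ unitCircle) ∧
    (∀ z ∈ unitCircle, z * F' z = ((‖F' z‖ : ℝ) : ℂ) * F z) ∧
    (∀ z ∈ unitCircle, c ≤ ‖F' z‖) ∧
    (∀ z ∈ unitCircle, 0 < ‖F' z‖)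

lemma nice_id : Nice 1 (fun z => z) := by
  refine ⟨fun _ => 1, continuousOn_const, fun z _ => hasDerivAt_id z, fun z hz => hz,
    fun z _ => by simp, fun z _ => by simp, fun z _ => by simp⟩

lemma nice_comp {c c' : ℝ} {F G : ℂ → ℂ} (hc : 0 ≤ c) (hc' : 0 ≤ c')
    (hF : Nice c F) (hG : Nice c' G) : Nice (c * c') (fun z => G (F z)) := by
  obtain ⟨F', hFc, hFd, hFm, hFi, hFl, hFp⟩ := hF
  obtain ⟨G', hGc, hGd, hGm, hGi, hGl, hGp⟩ := hG
  refine ⟨fun z => G' (F z) * F' z, ?_, ?_, ?_, ?_, ?_, ?_⟩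
  · have hFcont : ContinuousOn F unitCircle := fun z hz =>
      ((hFd z hz).continuousAt).continuousWithinAt
    exact (hGc.comp hFcont hFm).mul hFc
  · intro z hz
    exact (hGd (F z) (hFm z hz)).comp z (hFd z hz)
  · intro z hz; exact hGm _ (hFm z hz)
  · intro z hz
    have h1 := hFi z hz
    have h2 := hGi (F z) (hFm z hz)
    calc z * (G' (F z) * F' z) = (z * F' z) * G' (F z) := by ring
      _ = (((‖F' z‖ : ℝ) : ℂ) * F z) * G' (F z) := by rw [h1]
      _ = ((‖F' z‖ : ℝ) : ℂ) * (F z * G' (F z)) := by ring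
      _ = ((‖F' z‖ : ℝ) : ℂ) * (((‖G' (F z)‖ : ℝ) : ℂ) * G (F z)) := by rw [h2]
      _ = ((‖G' (F z) * F' z‖ : ℝ) : ℂ) * G (F z) := by
          rw [norm_mul]; push_cast; ring
  · intro z hz
    rw [norm_mul, mul_comm c c']
    exact mul_le_mul (hGl _ (hFm z hz)) (hFl z hz) hc (norm_nonneg _)
  · intro z hz
    rw [norm_mul]
    exact mul_pos (hGp _ (hFm z hz)) (hFp z hz)

lemma derivInfAux_nonneg (cf : (ℂ → ℂ) → ℝ) (h : ∀ g, 0 ≤ cf g) (L : List (ℂ → ℂ)) :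
    0 ≤ (L.map cf).prod := by
  induction L with
  | nil => simp
  | cons g L ih => simpa using mul_nonneg (h g) ih

lemma nice_foldl (cf : (ℂ → ℂ) → ℝ) (hcf : ∀ g, 0 ≤ cf g) (L : List (ℂ → ℂ))
    (h : ∀ g ∈ L, Nice (cf g) g) :
    Nice ((L.map cf).prod) (fun z => L.foldl (fun w g => g w) z) := by
  induction L with
  | nil => simpa using nice_id
  | cons g L ih =>
    have h1 : Nice (cf g) g := h g List.mem_cons_self
    have h2 := ih (fun g' hg' => h g' (List.mem_cons_of_mem _ hg'))
    have := nice_comp (hcf g) (derivInfAux_nonneg cf hcf L) h1 h2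
    simpa [List.foldl_cons] using this

lemma Em_fract (x : ℝ) : Em (Int.fract x) = Em x := by
  rw [Int.fract, show x - (⌊x⌋ : ℝ) = x + ((-⌊x⌋ : ℤ) : ℝ) by push_cast; ring, Em_add_int]

lemma Em_shift (x y : ℝ) : Em (y + Int.fract (x - y)) = Em x := by
  have h1 : y + Int.fract (x - y) = x + ((-⌊x - y⌋ : ℤ) : ℝ) := by
    rw [Int.fract]; push_cast; ring
  rw [h1, Em_add_int]

lemma Em_add_one (t : ℝ) : Em (t + 1) = Em t := by
  have h1 : t + 1 = t + ((1 : ℤ) : ℝ) := by push_cast; ring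
  rw [h1, Em_add_int]

/-- Main analytic lemma: expansion for a Nice circle map. -/
lemma nice_arc {F : ℂ → ℂ} {c : ℝ} (hc : 0 ≤ c) (hF : Nice c F)
    {a b : ℝ} (h0a : 0 ≤ a) (hab : a < b) (hb1 : b ≤ 1)
    (hsmall : mCircle (F '' (Em '' Set.Ico a b)) < 1) :
    (b - a) * c ≤ (mCircle (F '' (Em '' Set.Ico a b))).toReal := by
  obtain ⟨F', hF'c, hFd, hFm, hFi, hFl, hFp⟩ := hF
  have hhcont : Continuous fun t : ℝ => ‖F' (Em t)‖ :=
    continuous_norm.comp (hF'c.comp_continuous Em_cont Em_mem)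
  set h : ℝ → ℝ := fun t => ‖F' (Em t)‖ with hh
  set r : ℝ := Int.fract (Complex.arg (F (Em a)) / (2 * Real.pi)) with hr
  set f : ℝ → ℝ := fun t => r + ∫ s in a..t, h s with hf
  have hr0 : 0 ≤ r := Int.fract_nonneg _
  have hr1 : r < 1 := Int.fract_lt_one _
  have hfd : ∀ t : ℝ, HasDerivAt f (h t) t := by
    intro t
    have h1 := intervalIntegral.integral_hasDerivAt_right
      (hhcont.intervalIntegrable a t) (hhcont.stronglyMeasurableAtFilter _ _)
      hhcont.continuousAt
    exact h1.const_add r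
  have hfmono : StrictMono f :=
    strictMono_of_deriv_pos fun t => by
      rw [(hfd t).deriv]; exact hFp _ (Em_mem t)
  have hfdiff : Differentiable ℝ f := fun t => (hfd t).differentiableAt
  have hfcont : Continuous f := hfdiff.continuous
  have hfa : f a = r := by simp [hf]
  -- the cocycle q
  set q : ℝ → ℂ := fun t => F (Em t) * Complex.exp (-(2 * (Real.pi : ℂ) * Complex.I) * f t)
    with hq
  have hqd : ∀ t : ℝ, HasDerivAt q 0 t := by
    intro t
    have hG : HasDerivAt (fun z : ℂ => F (Complex.exp (2 * (Real.pi : ℂ) * Complex.I * z)))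
        (F' (Em t) * (Complex.exp (2 * (Real.pi : ℂ) * Complex.I * (t : ℂ)) *
          (2 * (Real.pi : ℂ) * Complex.I * 1))) (t : ℂ) :=
      (hFd (Em t) (Em_mem t)).comp (t : ℂ)
        (((hasDerivAt_id (t : ℂ)).const_mul (2 * (Real.pi : ℂ) * Complex.I)).cexp)
    have h1 : HasDerivAt (fun s : ℝ => F (Em s))
        (F' (Em t) * (Em t * (2 * (Real.pi : ℂ) * Complex.I * 1))) t := hG.comp_ofReal
    have h2 : HasDerivAt (fun s : ℝ => Complex.exp (-(2 * (Real.pi : ℂ) * Complex.I) * f s))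
        (Complex.exp (-(2 * (Real.pi : ℂ) * Complex.I) * f t) *
          (-(2 * (Real.pi : ℂ) * Complex.I) * (h t : ℂ))) t :=
      (((hfd t).ofReal_comp).const_mul (-(2 * (Real.pi : ℂ) * Complex.I))).cexp
    have h3 := h1.mul h2
    have key := hFi (Em t) (Em_mem t)
    have hval : F' (Em t) * (Em t * (2 * (Real.pi : ℂ) * Complex.I * 1)) *
          Complex.exp (-(2 * (Real.pi : ℂ) * Complex.I) * f t) +
        F (Em t) * (Complex.exp (-(2 * (Real.pi : ℂ) * Complex.I) * f t) *
          (-(2 * (Real.pi : ℂ) * Complex.I) * (h t : ℂ))) = 0 := by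
      simp only [hh]
      linear_combination (2 * (Real.pi : ℂ) * Complex.I *
        Complex.exp (-(2 * (Real.pi : ℂ) * Complex.I) * f t)) * key
    rw [hval] at h3
    exact h3
  have hconst : ∀ t : ℝ, q t = q a := fun t =>
    is_const_of_deriv_eq_zero (fun s => (hqd s).differentiableAt) (fun s => (hqd s).deriv) t a
  have hqa : q a = 1 := by
    have hw : F (Em a) ∈ unitCircle := hFm _ (Em_mem a)
    have hEmr : Em r = F (Em a) := by
      rw [hr, Em_fract, Em_arg hw]
    rw [hq]
    simp only [hfa]
    rw [← hEmr, Em, ← Complex.exp_add]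
    rw [show 2 * (Real.pi : ℂ) * Complex.I * (r : ℂ) +
      -(2 * (Real.pi : ℂ) * Complex.I) * (r : ℂ) = 0 by ring, Complex.exp_zero]
  have hlift : ∀ t : ℝ, F (Em t) = Em (f t) := by
    intro t
    have h1 : F (Em t) * Complex.exp (-(2 * (Real.pi : ℂ) * Complex.I) * (f t : ℂ)) = 1 := by
      have := (hconst t).trans hqa
      simpa [hq] using this
    rw [show -(2 * (Real.pi : ℂ) * Complex.I) * (f t : ℂ)
        = -(2 * (Real.pi : ℂ) * Complex.I * (f t : ℂ)) by ring] at h1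
    have h2 := congrArg (fun w => w * Complex.exp (2 * (Real.pi : ℂ) * Complex.I * (f t : ℂ))) h1
    have h3 : F (Em t) = Complex.exp (2 * ((Real.pi : ℂ) * (Complex.I * (f t : ℂ)))) := by
      simpa [mul_assoc, ← Complex.exp_add] using h2
    have h4 : Em (f t) = Complex.exp (2 * ((Real.pi : ℂ) * (Complex.I * (f t : ℂ)))) :=
      congrArg Complex.exp (by ring)
    rw [h4]
    exact h3
  -- image identification
  have hfI : f '' Set.Ico a b = Set.Ico (f a) (f b) := by
    apply Set.Subset.antisymm
    · rintro y ⟨x, hx, rfl⟩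
      exact ⟨hfmono.monotone hx.1, hfmono hx.2⟩
    · exact intermediate_value_Ico hab.le hfcont.continuousOn
  have himage : F '' (Em '' Set.Ico a b) = Em '' Set.Ico (f a) (f b) := by
    rw [Set.image_image]
    have h1 : (fun t : ℝ => F (Em t)) = fun t => Em (f t) := funext hlift
    rw [h1, ← Set.image_image Em f (Set.Ico a b), hfI]
  have hfab : f b - f a = ∫ s in a..b, h s := by simp [hf]
  have hcl : (b - a) * c ≤ f b - f a := by
    rw [hfab]
    have h1 : ∫ _ in a..b, c = (b - a) * c := by
      rw [intervalIntegral.integral_const, smul_eq_mul]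
    rw [← h1]
    apply intervalIntegral.integral_mono_on hab.le (intervalIntegrable_const)
      (hhcont.intervalIntegrable a b)
    intro x _
    exact hFl _ (Em_mem x)
  have hℓpos : 0 < f b - f a := sub_pos.mpr (hfmono hab)
  rw [himage] at hsmall ⊢
  -- the image length is < 1
  have hℓ1 : f b - f a < 1 := by
    by_contra hge
    push_neg at hge
    have hsub : Set.Ico (0 : ℝ) 1 ⊆ Em ⁻¹' (Em '' Set.Ico (f a) (f b)) := by
      intro t _
      refine ⟨f a + Int.fract (t - f a), ⟨le_add_of_nonneg_right (Int.fract_nonneg _), ?_⟩,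
        Em_shift t (f a)⟩
      have := Int.fract_lt_one (t - f a); linarith
    have h1 : (1 : ENNReal) ≤ mCircle (Em '' Set.Ico (f a) (f b)) := by
      refine le_trans ?_ (mCircle_ge _)
      rw [Set.inter_eq_self_of_subset_right hsub, Real.volume_Ico]
      simp
    exact absurd hsmall (not_lt.mpr h1)
  -- lower bound for the measure
  have hlow : ENNReal.ofReal (f b - f a) ≤ mCircle (Em '' Set.Ico (f a) (f b)) := by
    rcases le_or_gt (f b) 1 with hfb | hfb
    · refine le_trans ?_ (mCircle_ge _)
      have hsub : Set.Ico (f a) (f b) ⊆ Em ⁻¹' (Em '' Set.Ico (f a) (f b)) ∩ Set.Ico 0 1 := by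
        intro t ht
        exact ⟨⟨t, ht, rfl⟩, ⟨le_trans (hfa ▸ hr0) ht.1, lt_of_lt_of_le ht.2 hfb⟩⟩
      calc ENNReal.ofReal (f b - f a) = volume (Set.Ico (f a) (f b)) := by rw [Real.volume_Ico]
        _ ≤ _ := measure_mono hsub
    · refine le_trans ?_ (mCircle_ge _)
      have hsub : Set.Ico (f a) 1 ∪ Set.Ico 0 (f b - 1)
          ⊆ Em ⁻¹' (Em '' Set.Ico (f a) (f b)) ∩ Set.Ico 0 1 := by
        intro t ht
        rcases ht with ht | ht
        · exact ⟨⟨t, ⟨ht.1, lt_trans ht.2 hfb⟩, rfl⟩, ⟨le_trans (hfa ▸ hr0) ht.1, ht.2⟩⟩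
        · refine ⟨⟨t + 1, ⟨?_, by linarith [ht.2]⟩, ?_⟩, ⟨ht.1, by
            have : f b - 1 < f a := by linarith
            have : f a < 1 := hfa ▸ hr1
            linarith [ht.2]⟩⟩
          · have : f a < 1 := hfa ▸ hr1
            linarith [ht.1]
          · exact Em_add_one t
      have hdisj : Disjoint (Set.Ico (f a) 1) (Set.Ico (0 : ℝ) (f b - 1)) := by
        rw [Set.disjoint_left]
        intro x hx1 hx2
        have : f b - 1 < f a := by linarith
        linarith [hx1.1, hx2.2]
      calc ENNReal.ofReal (f b - f a)
          = ENNReal.ofReal ((1 - f a) + (f b - 1)) := by ring_nf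
        _ = ENNReal.ofReal (1 - f a) + ENNReal.ofReal (f b - 1) :=
            ENNReal.ofReal_add (by linarith [hfa ▸ hr1]) (by linarith)
        _ = volume (Set.Ico (f a) 1 ∪ Set.Ico 0 (f b - 1)) := by
            rw [measure_union hdisj measurableSet_Ico, Real.volume_Ico, Real.volume_Ico,
              sub_zero]
        _ ≤ _ := measure_mono hsub
  have hne : mCircle (Em '' Set.Ico (f a) (f b)) ≠ ⊤ := ne_top_of_lt hsmall
  have h2 := ENNReal.toReal_mono hne hlow
  rw [ENNReal.toReal_ofReal hℓpos.le] at h2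
  linarith

local notation "conj'" => starRingEnd ℂ

lemma den_ne_s8 {w z : ℂ} (hw : ‖w‖ < 1) (hz : ‖z‖ = 1) :
    1 - conj' w * z ≠ 0 := by
  intro h
  have h1 : conj' w * z = 1 := by linear_combination -h
  have := congrArg (‖·‖) h1
  rw [norm_mul, Complex.norm_conj, hz, mul_one, norm_one] at this
  exact absurd this (ne_of_lt hw)

lemma num_ne {w z : ℂ} (hw : ‖w‖ < 1) (hz : ‖z‖ = 1) : z - w ≠ 0 := by
  intro h
  have : z = w := by linear_combination h
  rw [this] at hz; exact absurd hz (ne_of_lt hw)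

lemma key_conj {w z : ℂ} (hz : ‖z‖ = 1) :
    1 - conj' w * z = z * conj' (z - w) := by
  have h1 : z * conj' z = 1 := by
    rw [Complex.mul_conj]
    norm_cast
    rw [← Complex.sq_norm, hz]; norm_num
  rw [map_sub]
  linear_combination -h1

theorem blaschke_nice {n : ℕ} {T : ℂ → ℂ} (hB : IsBlaschke n T) : Nice (derivInf T) T := by
  obtain ⟨hn, θ₀, a, hθ, ha, hT⟩ := hB
  have hTfun : T = fun z => θ₀ * ∏ i, (z - a i) / (1 - conj' (a i) * z) := funext hT
  set b : Fin n → ℂ → ℂ := fun i z => (z - a i) / (1 - conj' (a i) * z) with hb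
  set d : Fin n → ℂ → ℂ := fun i z => (1 - (Complex.normSq (a i) : ℂ)) / (1 - conj' (a i) * z) ^ 2
    with hd
  set F' : ℂ → ℂ := fun z => θ₀ * ∑ i, (∏ j ∈ Finset.univ.erase i, b j z) * d i z with hF'
  -- derivative of each factor
  have hbd : ∀ (i : Fin n) (z : ℂ), ‖z‖ = 1 → HasDerivAt (b i) (d i z) z := by
    intro i z hz
    have hden := den_ne_s8 (ha i) hz
    have h1 : HasDerivAt (fun z : ℂ => z - a i) 1 z := (hasDerivAt_id z).sub_const (a i)
    have h2 : HasDerivAt (fun z : ℂ => 1 - conj' (a i) * z) (-(conj' (a i))) z := by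
      simpa using ((hasDerivAt_id z).const_mul (conj' (a i))).const_sub 1
    have h3 := h1.div h2 hden
    have hcc : conj' (a i) * a i = (Complex.normSq (a i) : ℂ) := by
      rw [mul_comm, Complex.mul_conj]
    have hnum : (1 : ℂ) - (Complex.normSq (a i) : ℂ)
        = 1 * (1 - conj' (a i) * z) - (z - a i) * -conj' (a i) := by
      linear_combination hcc
    refine h3.congr_deriv ?_
    symm
    show (1 - (Complex.normSq (a i) : ℂ)) / (1 - conj' (a i) * z) ^ 2 = _
    rw [hnum]
  -- derivative of T
  have hTd : ∀ z : ℂ, ‖z‖ = 1 → HasDerivAt T (F' z) z := by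
    intro z hz
    have h := HasDerivAt.finset_prod (u := Finset.univ) (f := b)
      (f' := fun i => d i z) (x := z) (fun i _ => hbd i z hz)
    have h2 := h.const_mul θ₀
    have hval : F' z = θ₀ * ∑ i, (∏ j ∈ Finset.univ.erase i, b j z) • d i z := by
      rw [hF']; simp [smul_eq_mul]
    have hfun : (fun y => θ₀ * (∏ i, b i) y)
        = fun z => θ₀ * ∏ i, (z - a i) / (1 - conj' (a i) * z) := by
      funext y; simp only [Finset.prod_apply, hb]
    rw [hfun] at h2
    rw [hTfun, hval]
    exact h2
  -- termwise Poisson identity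
  have hterm : ∀ (i : Fin n) (z : ℂ), ‖z‖ = 1 →
      z * d i z = ((poissonK (a i) z : ℝ) : ℂ) * b i z := by
    intro i z hz
    have hz0 : z ≠ 0 := by intro h; rw [h] at hz; simp at hz
    have hza := num_ne (ha i) hz
    have hzac : conj' (z - a i) ≠ 0 := fun h => hza ((map_eq_zero _).mp h)
    have hkey := key_conj (w := a i) hz
    have hws : ((‖z - a i‖ ^ 2 : ℝ) : ℂ) = (z - a i) * conj' (z - a i) := by
      rw [Complex.sq_norm, Complex.mul_conj]
    have hna : ((1 - ‖a i‖ ^ 2 : ℝ) : ℂ) = 1 - (Complex.normSq (a i) : ℂ) := by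
      push_cast [Complex.sq_norm]; ring
    rw [hd, hb, poissonK]
    push_cast
    rw [hkey]
    rw [show ((‖z - a i‖ : ℝ) : ℂ) ^ 2 = (z - a i) * conj' (z - a i) by
      rw [← hws]; push_cast; ring]
    rw [show (1 : ℂ) - ((‖a i‖ : ℝ) : ℂ) ^ 2 = 1 - (Complex.normSq (a i) : ℂ) by
      rw [← hna]; push_cast; ring]
    set w := z - a i with hwdef
    set cw := conj' w with hcw
    field_simp
  -- the full Poisson identity
  set S : ℂ → ℝ := fun z => ∑ i, poissonK (a i) z with hS
  have hident : ∀ z : ℂ, ‖z‖ = 1 → z * F' z = ((S z : ℝ) : ℂ) * T z := by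
    intro z hz
    have expand : ∀ i : Fin n, z * ((∏ j ∈ Finset.univ.erase i, b j z) * d i z)
        = ((poissonK (a i) z : ℝ) : ℂ) * ∏ j, b j z := by
      intro i
      rw [show z * ((∏ j ∈ Finset.univ.erase i, b j z) * d i z)
          = (∏ j ∈ Finset.univ.erase i, b j z) * (z * d i z) by ring,
        hterm i z hz, ← Finset.mul_prod_erase _ _ (Finset.mem_univ i)]
      ring
    calc z * F' z
        = θ₀ * ∑ i, z * ((∏ j ∈ Finset.univ.erase i, b j z) * d i z) := by
          simp only [hF', Finset.mul_sum]
          exact Finset.sum_congr rfl fun i _ => by ring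
      _ = θ₀ * ∑ i, ((poissonK (a i) z : ℝ) : ℂ) * ∏ j, b j z := by
          congr 1
          exact Finset.sum_congr rfl fun i _ => expand i
      _ = ((S z : ℝ) : ℂ) * (θ₀ * ∏ j, b j z) := by
          rw [hS]
          push_cast
          rw [Finset.sum_mul]
          simp only [Finset.mul_sum]
          exact Finset.sum_congr rfl fun i _ => by ring
      _ = ((S z : ℝ) : ℂ) * T z := by
          rw [hT z]
  -- T maps circle to circle
  have habT : ∀ z : ℂ, ‖z‖ = 1 → ‖T z‖ = 1 := by
    intro z hz
    have hfac : ∀ i : Fin n, ‖(z - a i) / (1 - conj' (a i) * z)‖ = 1 := by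
      intro i
      rw [norm_div, key_conj hz, norm_mul, Complex.norm_conj, hz, one_mul, div_self]
      exact norm_ne_zero_iff.mpr (num_ne (ha i) hz)
    rw [hT z, norm_mul, norm_prod, hθ, one_mul]
    exact Finset.prod_eq_one fun i _ => hfac i
  -- positivity of the Poisson sum
  have hSpos : ∀ z : ℂ, ‖z‖ = 1 → 0 < S z := by
    intro z hz
    have : Nonempty (Fin n) := Fin.pos_iff_nonempty.mp hn
    refine Finset.sum_pos (fun i _ => ?_) Finset.univ_nonempty
    have h1 : ‖a i‖ ^ 2 < 1 := by nlinarith [norm_nonneg (a i), ha i]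
    have h2 : 0 < ‖z - a i‖ ^ 2 :=
      pow_pos (norm_pos_iff.mpr (num_ne (ha i) hz)) 2
    exact div_pos (by linarith) h2
  -- |F'| = S on circle
  have habF' : ∀ z : ℂ, ‖z‖ = 1 → ‖F' z‖ = S z := by
    intro z hz
    have h : ‖z‖ * ‖F' z‖
        = ‖((S z : ℝ) : ℂ)‖ * ‖T z‖ := by
      rw [← norm_mul, ← norm_mul, hident z hz]
    rw [hz, one_mul, habT z hz, mul_one,
      Complex.norm_of_nonneg (hSpos z hz).le] at h
    exact h
  -- continuity of F' on the circle
  have hF'cont : ContinuousOn F' unitCircle := by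
    simp only [hF']
    apply ContinuousOn.mul continuousOn_const
    apply continuousOn_finset_sum
    intro i _
    apply ContinuousOn.mul
    · apply continuousOn_finset_prod
      intro j _
      simp only [hb]
      exact ContinuousOn.div (by fun_prop) (by fun_prop) fun z hz => den_ne_s8 (ha j) hz
    · simp only [hd]
      exact ContinuousOn.div continuousOn_const (by fun_prop)
        fun z hz => pow_ne_zero 2 (den_ne_s8 (ha i) hz)
  refine ⟨F', hF'cont, fun z hz => hTd z hz, fun z hz => habT z hz, ?_, ?_, ?_⟩
  · intro z hz
    rw [habF' z hz]
    exact hident z hz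
  · intro z hz
    have hbdd : BddBelow (range fun w : unitCircle => ‖deriv T (w : ℂ)‖) :=
      ⟨0, by rintro x ⟨w, rfl⟩; exact norm_nonneg _⟩
    have h := ciInf_le hbdd (⟨z, hz⟩ : unitCircle)
    rw [derivInf]
    rw [(hTd z hz).deriv] at h
    exact h
  · intro z hz
    rw [habF' z hz]
    exact hSpos z hz

/-- expansion estimate for the image of an arc under a composition of
Blaschke products, as long as the image is not the whole circle. -/
theorem arc_expansion (n : ℕ) (hn : 1 ≤ n)
    (T : Fin n → ℂ → ℂ) (deg : Fin n → ℕ) (hB : ∀ k, IsBlaschke (deg k) (T k))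
    (A : Set ℂ) (a b : ℝ) (h0a : 0 ≤ a) (hab : a < b) (hb1 : b ≤ 1)
    (hA : A = (fun t : ℝ => Complex.exp (2 * (Real.pi : ℂ) * Complex.I * (t : ℂ))) '' Set.Ico a b)
    (hsmall : mCircle (compFam n T '' A) < 1) :
    (mCircle A).toReal * ∏ k, derivInf (T k) ≤ (mCircle (compFam n T '' A)).toReal := by
  have hA' : A = Em '' Set.Ico a b := hA
  have hnn : ∀ g : ℂ → ℂ, 0 ≤ derivInf g := fun g =>
    Real.iInf_nonneg fun z => norm_nonneg _
  have hmem : ∀ g ∈ List.ofFn T, Nice (derivInf g) g := by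
    intro g hg
    obtain ⟨k, rfl⟩ := List.mem_ofFn.mp hg
    exact blaschke_nice (hB k)
  have hnice0 := nice_foldl derivInf hnn (List.ofFn T) hmem
  have hprod : ((List.ofFn T).map derivInf).prod = ∏ k, derivInf (T k) := by
    rw [List.map_ofFn, List.prod_ofFn]; rfl
  rw [hprod] at hnice0
  have hnice : Nice (∏ k, derivInf (T k)) (compFam n T) := hnice0
  have hP : 0 ≤ ∏ k, derivInf (T k) := Finset.prod_nonneg fun k _ => hnn (T k)
  rw [hA'] at hsmall
  have hmain := nice_arc hP hnice h0a hab hb1 hsmall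
  have hAle : (mCircle A).toReal ≤ b - a := by
    rw [hA']
    have h1 := mCircle_arc_le h0a hab.le hb1
    have h2 := ENNReal.toReal_mono ENNReal.ofReal_ne_top h1
    rwa [ENNReal.toReal_ofReal (by linarith)] at h2
  calc (mCircle A).toReal * ∏ k, derivInf (T k)
      ≤ (b - a) * ∏ k, derivInf (T k) := mul_le_mul_of_nonneg_right hAle hP
    _ ≤ (mCircle (compFam n T '' A)).toReal := by rw [hA']; exact hmain
end
end

section
/- Let T(z) = −((z − 0.4)/(1 − 0.4·z))². Then T is a finite Blaschke product of degree 2 satisfying: inf_{z∈𝕋} |T'(z)| = 6/7, attained at z = −1; T(−1) = −1; and |T'(−1)| = 6/7 < 1, so z = −1 is an attracting fixed point of T on 𝕋 and T is not uniformly expanding on 𝕋. -/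
open MeasureTheory Filter Set

noncomputable section

/-- On the unit circle, |z − 2/5| = |1 − (2/5)z|. -/
lemma abs_circle_aux (z : ℂ) (hz : ‖z‖ = 1) :
    ‖z - 2/5‖ = ‖1 - (2/5)*z‖ := by
  have h1 : z * (starRingEnd ℂ) z = 1 := by
    rw [Complex.mul_conj]
    norm_cast
    rw [← Complex.sq_norm z, hz]; norm_num
  have h2 : z - 2/5 = z * ((starRingEnd ℂ) (1 - (2/5)*z)) := by
    simp only [map_sub, map_mul, map_one, map_div₀, map_ofNat]
    linear_combination (2/5 : ℂ) * h1
  rw [h2, norm_mul, hz, one_mul, RCLike.norm_conj]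

/-- The denominator does not vanish on the circle. -/
lemma denom_ne_zero (z : ℂ) (hz : ‖z‖ = 1) : (1 - (2/5) * z) ≠ 0 := by
  intro h
  have h1 : (1 : ℂ) = (2/5) * z := by linear_combination h
  have := congrArg (‖·‖) h1
  rw [norm_one, norm_mul, hz, mul_one] at this
  have h25 : ‖(2/5 : ℂ)‖ = 2/5 := by
    rw [norm_div, Complex.norm_ofNat, Complex.norm_ofNat]
  rw [h25] at this
  norm_num at this

/-- Formula for the derivative of T. -/
lemma deriv_T (T : ℂ → ℂ) (hT : ∀ z : ℂ, T z = -((z - 2/5) / (1 - (2/5) * z)) ^ 2)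
    (z : ℂ) (hv : (1 - (2/5) * z) ≠ 0) :
    deriv T z = -(42/25) * (z - 2/5) / (1 - (2/5)*z)^3 := by
  have hd : HasDerivAt (fun w : ℂ => 1 - (2/5) * w) (-(2/5 * 1)) z :=
    ((hasDerivAt_id z).const_mul (2/5)).const_sub 1
  have hc : HasDerivAt (fun w : ℂ => w - 2/5) 1 z := (hasDerivAt_id z).sub_const (2/5)
  have hB := hc.div hd hv
  have hD : HasDerivAt (fun w : ℂ => -((w - 2/5) / (1 - (2/5) * w)) ^ 2) _ z := (hB.pow 2).neg
  have hTeq : T = fun w : ℂ => -((w - 2/5) / (1 - (2/5) * w)) ^ 2 := funext hT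
  rw [hTeq, hD.deriv]
  simp only [Pi.div_apply]
  push_cast
  field_simp
  ring

/-- |T'(z)| on the circle. -/
lemma abs_deriv_T (T : ℂ → ℂ) (hT : ∀ z : ℂ, T z = -((z - 2/5) / (1 - (2/5) * z)) ^ 2)
    (z : ℂ) (hz : ‖z‖ = 1) :
    ‖deriv T z‖ = (42/25) / ‖1 - (2/5)*z‖ ^ 2 := by
  have hv := denom_ne_zero z hz
  rw [deriv_T T hT z hv, norm_div, norm_mul, norm_neg, norm_pow]
  rw [abs_circle_aux z hz]
  have h425 : ‖(42/25 : ℂ)‖ = 42/25 := by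
    rw [norm_div, Complex.norm_ofNat, Complex.norm_ofNat]
  rw [h425]
  have hr : (0:ℝ) < ‖1 - (2/5)*z‖ := norm_pos_iff.mpr hv
  rw [div_eq_div_iff (by positivity) (by positivity)]
  ring

/-- the map T(z) = −((z−0.4)/(1−0.4z))² is a degree-2 Blaschke product with
inf_{z∈𝕋}|T'| = 6/7 attained at z = −1, which is an attracting fixed point on 𝕋; in
particular T is not uniformly expanding on 𝕋. -/
theorem example_attracting_blaschke
    (T : ℂ → ℂ) (hT : ∀ z : ℂ, T z = -((z - 0.4) / (1 - 0.4 * z)) ^ 2) :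
    IsBlaschke 2 T ∧
    derivInf T = 6 / 7 ∧
    ‖deriv T (-1)‖ = 6 / 7 ∧
    T (-1) = -1 ∧
    ‖deriv T (-1)‖ < 1 ∧
    ¬ (1 < derivInf T) := by
  have h04 : (0.4 : ℂ) = 2/5 := by norm_num
  have hT' : ∀ z : ℂ, T z = -((z - 2/5) / (1 - (2/5) * z)) ^ 2 := by
    intro z; rw [hT z, h04]
  -- |T'(-1)| = 6/7
  have hm1 : ‖(-1 : ℂ)‖ = 1 := by simp
  have hval : ‖deriv T (-1)‖ = 6/7 := by
    rw [abs_deriv_T T hT' (-1) hm1]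
    have : (1 - (2/5) * (-1 : ℂ)) = 7/5 := by ring
    rw [this]
    have : ‖(7/5 : ℂ)‖ = 7/5 := by
      rw [norm_div, Complex.norm_ofNat, Complex.norm_ofNat]
    rw [this]
    norm_num
  -- lower bound
  have hlb : ∀ z : ℂ, ‖z‖ = 1 → 6/7 ≤ ‖deriv T z‖ := by
    intro z hz
    rw [abs_deriv_T T hT' z hz]
    set r := ‖1 - (2/5)*z‖ with hr
    have hrle : r ≤ 7/5 := by
      calc r = ‖1 - (2/5)*z‖ := rfl
        _ ≤ ‖(1:ℂ)‖ + ‖(2/5)*z‖ := norm_sub_le _ _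
        _ = 7/5 := by
            rw [norm_one, norm_mul, hz, mul_one,
              norm_div, Complex.norm_ofNat, Complex.norm_ofNat]
            norm_num
    have hrpos : 0 < r := by
      rw [hr]
      exact norm_pos_iff.mpr (denom_ne_zero z hz)
    rw [le_div_iff₀ (by positivity)]
    nlinarith
  -- derivInf = 6/7
  have hmem : (-1 : ℂ) ∈ unitCircle := hm1
  have hInf : derivInf T = 6/7 := by
    unfold derivInf
    haveI : Nonempty unitCircle := ⟨⟨-1, hmem⟩⟩
    apply le_antisymm
    · have hbdd : BddBelow (Set.range fun z : unitCircle => ‖deriv T (z : ℂ)‖) := by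
        refine ⟨0, ?_⟩
        rintro x ⟨w, rfl⟩
        positivity
      have := ciInf_le hbdd (⟨-1, hmem⟩ : unitCircle)
      simpa [hval] using this
    · exact le_ciInf fun z => hlb z z.2
  refine ⟨?_, hInf, hval, ?_, by rw [hval]; norm_num, by rw [hInf]; norm_num⟩
  · refine ⟨one_le_two, -1, fun _ => 2/5, by simp, ?_, ?_⟩
    · intro i
      rw [norm_div, Complex.norm_ofNat, Complex.norm_ofNat]
      norm_num
    · intro z
      rw [hT' z, Fin.prod_univ_two]
      have hc : (starRingEnd ℂ) (2/5 : ℂ) = 2/5 := by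
        simp only [map_div₀, map_ofNat]
      rw [hc]
      ring
  · rw [hT' (-1)]
    have h1 : ((-1 : ℂ) - 2/5) = -(7/5) := by ring
    have h2 : (1 - (2/5) * (-1 : ℂ)) = 7/5 := by ring
    rw [h1, h2]
    norm_num
end
end
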